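/- arXiv:1002.1058 — 4 statements merged into one kernel-verified Lean document; each statement's English description precedes it below -/
import Mathlib

section
/- Let n ≥ 1, let Pₙ be the path graph on vertices Δ = {α₁,…,αₙ}, and let J₀ ⊆ Δ. Let μ denote the Möbius function of the finite lattice Λ*(Pₙ,J₀). Then for admissible subsets U ⊆ W: μ(U,W) = (−1)^{|W|−|U|} if the interval [U,W] is order-isomorphic to the Boolean lattice of all subsets of a set with |W| − |U| elements, and μ(U,W) = 0 otherwise. -/
open SimpleGraph Finset

/-- `ReachIn G U a b` : `b` is reachable from `a` within the subgraph of `G`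
induced on the vertex set `U`. -/
def ReachIn {n : ℕ} (G : SimpleGraph (Fin n)) (U : Finset (Fin n)) (a b : Fin n) : Prop :=
  Relation.ReflTransGen (fun x y => G.Adj x y ∧ x ∈ U ∧ y ∈ U) a b

/-- `U` is admissible (with respect to `J₀`) if no connected component of the
subgraph of `G` induced on `U` is entirely contained in `J₀`: every component
contains a vertex outside `J₀`. -/
def Admissible {n : ℕ} (G : SimpleGraph (Fin n)) (J₀ U : Finset (Fin n)) : Prop :=
  ∀ a ∈ U, ∃ b, ReachIn G U a b ∧ b ∉ J₀

/-- A subset `A` is connected if the induced subgraph on `A` is connected. -/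
def ConnIn {n : ℕ} (G : SimpleGraph (Fin n)) (A : Finset (Fin n)) : Prop :=
  ∀ a ∈ A, ∀ b ∈ A, ReachIn G A a b

theorem ReachIn.mono {n : ℕ} {G : SimpleGraph (Fin n)} {U V : Finset (Fin n)} (h : U ⊆ V)
    {a b : Fin n} (hr : ReachIn G U a b) : ReachIn G V a b :=
  by
  unfold ReachIn at *
  induction hr with
  | refl => exact Relation.ReflTransGen.refl
  | tail _ hxy ih => exact ih.tail ⟨hxy.1, h hxy.2.1, h hxy.2.2⟩

theorem admissible_empty {n : ℕ} (G : SimpleGraph (Fin n)) (J₀ : Finset (Fin n)) :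
    Admissible G J₀ ∅ := fun a ha => absurd ha (Finset.notMem_empty a)

theorem admissible_union {n : ℕ} {G : SimpleGraph (Fin n)} {J₀ U V : Finset (Fin n)}
    (hU : Admissible G J₀ U) (hV : Admissible G J₀ V) : Admissible G J₀ (U ∪ V) := by
  intro a ha
  rcases Finset.mem_union.mp ha with h | h
  · obtain ⟨b, hb, hbJ⟩ := hU a h
    exact ⟨b, hb.mono Finset.subset_union_left, hbJ⟩
  · obtain ⟨b, hb, hbJ⟩ := hV a h
    exact ⟨b, hb.mono Finset.subset_union_right, hbJ⟩

/-- `Λ*(G, J₀)` : the poset of admissible subsets, ordered by inclusion. -/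
def CrossSection {n : ℕ} (G : SimpleGraph (Fin n)) (J₀ : Finset (Fin n)) : Type :=
  {U : Finset (Fin n) // Admissible G J₀ U}

namespace CrossSection

variable {n : ℕ} {G : SimpleGraph (Fin n)} {J₀ : Finset (Fin n)}

instance : PartialOrder (CrossSection G J₀) :=
  inferInstanceAs (PartialOrder {U : Finset (Fin n) // Admissible G J₀ U})

instance : DecidableEq (CrossSection G J₀) :=
  inferInstanceAs (DecidableEq {U : Finset (Fin n) // Admissible G J₀ U})

noncomputable instance : Fintype (CrossSection G J₀) :=
  Fintype.ofInjective (Subtype.val : CrossSection G J₀ → Finset (Fin n)) Subtype.val_injective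

open Classical in
/-- The underlying set of the meet of two admissible sets: the largest admissible
subset contained in the intersection. -/
noncomputable def meetFinset (G : SimpleGraph (Fin n)) (J₀ : Finset (Fin n))
    (U V : Finset (Fin n)) : Finset (Fin n) :=
  ((U ∩ V).powerset.filter (fun W => Admissible G J₀ W)).sup id

theorem admissible_sup {s : Finset (Finset (Fin n))}
    (h : ∀ W ∈ s, Admissible G J₀ W) : Admissible G J₀ (s.sup id) :=
  Finset.sup_induction (by simpa using admissible_empty G J₀)
    (fun a ha b hb => by simpa using admissible_union ha hb) h

theorem admissible_meetFinset (G : SimpleGraph (Fin n)) (J₀ U V : Finset (Fin n)) :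
    Admissible G J₀ (meetFinset G J₀ U V) := by
  classical
  exact admissible_sup (fun W hW => (Finset.mem_filter.mp hW).2)

theorem meetFinset_subset_left (G : SimpleGraph (Fin n)) (J₀ U V : Finset (Fin n)) :
    meetFinset G J₀ U V ≤ U := by
  classical
  unfold meetFinset
  refine Finset.sup_le (fun W hW => ?_)
  have := Finset.mem_powerset.mp (Finset.mem_filter.mp hW).1
  exact fun x hx => (Finset.mem_inter.mp (this hx)).1

theorem meetFinset_subset_right (G : SimpleGraph (Fin n)) (J₀ U V : Finset (Fin n)) :
    meetFinset G J₀ U V ≤ V := by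
  classical
  unfold meetFinset
  refine Finset.sup_le (fun W hW => ?_)
  have := Finset.mem_powerset.mp (Finset.mem_filter.mp hW).1
  exact fun x hx => (Finset.mem_inter.mp (this hx)).2

theorem subset_meetFinset {G : SimpleGraph (Fin n)} {J₀ U V W : Finset (Fin n)}
    (hW : Admissible G J₀ W) (h1 : W ⊆ U) (h2 : W ⊆ V) : W ≤ meetFinset G J₀ U V := by
  classical
  unfold meetFinset
  exact Finset.le_sup (f := id)
    (Finset.mem_filter.mpr ⟨Finset.mem_powerset.mpr (Finset.subset_inter h1 h2), hW⟩)

noncomputable instance : Lattice (CrossSection G J₀) :=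
  { (inferInstance : PartialOrder (CrossSection G J₀)) with
    sup := fun U V => ⟨U.1 ∪ V.1, admissible_union U.2 V.2⟩
    le_sup_left := fun U V => show U.1 ⊆ U.1 ∪ V.1 from Finset.subset_union_left
    le_sup_right := fun U V => show V.1 ⊆ U.1 ∪ V.1 from Finset.subset_union_right
    sup_le := fun U V W h1 h2 => show U.1 ∪ V.1 ⊆ W.1 from Finset.union_subset h1 h2
    inf := fun U V => ⟨meetFinset G J₀ U.1 V.1, admissible_meetFinset G J₀ U.1 V.1⟩
    inf_le_left := fun U V => meetFinset_subset_left G J₀ U.1 V.1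
    inf_le_right := fun U V => meetFinset_subset_right G J₀ U.1 V.1
    le_inf := fun W U V h1 h2 => subset_meetFinset W.2 h1 h2 }

instance : OrderBot (CrossSection G J₀) where
  bot := ⟨∅, admissible_empty G J₀⟩
  bot_le := fun U => show (∅ : Finset (Fin n)) ⊆ U.1 from Finset.empty_subset _

@[simp] theorem sup_val (U V : CrossSection G J₀) : (U ⊔ V).1 = U.1 ∪ V.1 := rfl

@[simp] theorem inf_val (U V : CrossSection G J₀) : (U ⊓ V).1 = meetFinset G J₀ U.1 V.1 := rfl

end CrossSection

section Helpers

variable {n : ℕ} {G : SimpleGraph (Fin n)} {J₀ : Finset (Fin n)}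

/-- Every set between `U` and `W` is admissible. -/
def AllAdm (G : SimpleGraph (Fin n)) (J₀ U W : Finset (Fin n)) : Prop :=
  ∀ V : Finset (Fin n), U ⊆ V → V ⊆ W → Admissible G J₀ V

theorem allAdm_self {U : Finset (Fin n)} (hU : Admissible G J₀ U) : AllAdm G J₀ U U :=
  fun V h1 h2 => (Finset.Subset.antisymm h2 h1) ▸ hU

theorem allAdm_mono {U W W' : Finset (Fin n)} (h : W ⊆ W') (hA : AllAdm G J₀ U W') :
    AllAdm G J₀ U W := fun V h1 h2 => hA V h1 (h2.trans h)

theorem admissible_insert {V : Finset (Fin n)} (hV : Admissible G J₀ V) {d : Fin n}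
    (hd : d ∉ J₀ ∨ ∃ u ∈ V, G.Adj d u) : Admissible G J₀ (insert d V) := by
  intro a ha
  rcases Finset.mem_insert.mp ha with rfl | haV
  · rcases hd with hd | ⟨u, hu, hadj⟩
    · exact ⟨a, Relation.ReflTransGen.refl, hd⟩
    · obtain ⟨b, hb, hbJ⟩ := hV u hu
      exact ⟨b, Relation.ReflTransGen.trans
        (Relation.ReflTransGen.single
          ⟨hadj, Finset.mem_insert_self _ _, Finset.mem_insert_of_mem hu⟩)
        (hb.mono (Finset.subset_insert _ _)), hbJ⟩
  · obtain ⟨b, hb, hbJ⟩ := hV a haV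
    exact ⟨b, hb.mono (Finset.subset_insert _ _), hbJ⟩

theorem allAdm_insert {U S : Finset (Fin n)} {d : Fin n} (hdU : d ∉ U)
    (hcone : d ∉ J₀ ∨ ∃ u ∈ U, G.Adj d u)
    (h : AllAdm G J₀ U (U ∪ S)) : AllAdm G J₀ U (U ∪ insert d S) := by
  intro V hUV hVW
  by_cases hdV : d ∈ V
  · have hUe : U ⊆ V.erase d := fun u hu =>
      Finset.mem_erase.mpr ⟨fun he => hdU (he ▸ hu), hUV hu⟩
    have heW : V.erase d ⊆ U ∪ S := by
      intro x hx
      obtain ⟨hxd, hxV⟩ := Finset.mem_erase.mp hx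
      rcases Finset.mem_union.mp (hVW hxV) with h1 | h1
      · exact Finset.mem_union_left _ h1
      · rcases Finset.mem_insert.mp h1 with rfl | h2
        · exact absurd rfl hxd
        · exact Finset.mem_union_right _ h2
    have hadm : Admissible G J₀ (V.erase d) := h _ hUe heW
    have : Admissible G J₀ (insert d (V.erase d)) := by
      refine admissible_insert hadm ?_
      rcases hcone with h1 | ⟨u, hu, h2⟩
      · exact Or.inl h1
      · exact Or.inr ⟨u, hUe hu, h2⟩
    rwa [Finset.insert_erase hdV] at this
  · refine h V hUV ?_
    intro x hx
    rcases Finset.mem_union.mp (hVW hx) with h1 | h1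
    · exact Finset.mem_union_left _ h1
    · rcases Finset.mem_insert.mp h1 with rfl | h2
      · exact absurd hx hdV
      · exact Finset.mem_union_right _ h2

/-- If some set between `U` and `W` is non-admissible, there is a "cone point"
`d ∈ W \ U` : a vertex outside `J₀` or adjacent to `U`. -/
theorem exists_cone {U W : CrossSection G J₀} (hUW : U ≤ W) (hne : U ≠ W) :
    ∃ d ∈ W.1 \ U.1, d ∉ J₀ ∨ ∃ u ∈ U.1, G.Adj d u := by
  by_contra hcon
  push_neg at hcon
  have hss : U.1 ⊂ W.1 :=
    ⟨hUW, fun h' => hne (Subtype.ext (Finset.Subset.antisymm hUW h'))⟩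
  obtain ⟨d₀, hd₀W, hd₀U⟩ := Finset.exists_of_ssubset hss
  have hd₀D : d₀ ∈ W.1 \ U.1 := Finset.mem_sdiff.mpr ⟨hd₀W, hd₀U⟩
  have hreach : ∀ b, ReachIn G W.1 d₀ b → b ∈ W.1 \ U.1 := by
    intro b hb
    induction hb with
    | refl => exact hd₀D
    | tail _hsteps hstep ih =>
      rename_i c b'
      obtain ⟨hadj, hcW, hbW⟩ := hstep
      refine Finset.mem_sdiff.mpr ⟨hbW, fun hbU => ?_⟩
      exact (hcon c ih).2 b' hbU hadj
  obtain ⟨b, hb, hbJ⟩ := W.2 d₀ hd₀W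
  exact hbJ ((hcon b (hreach b hb)).1)

open scoped Classical in
theorem icc_iso_iff {U W : CrossSection G J₀} (hUW : U ≤ W) :
    Nonempty (Set.Icc U W ≃o Finset (Fin (W.1.card - U.1.card))) ↔
      AllAdm G J₀ U.1 W.1 := by
  classical
  have hsub : U.1 ⊆ W.1 := hUW
  have hD : (W.1 \ U.1).card = W.1.card - U.1.card := Finset.card_sdiff_of_subset hsub
  constructor
  · rintro ⟨e⟩
    -- counting argument
    set D := W.1 \ U.1 with hDdef
    have hrecover : ∀ V : Set.Icc U W, V.1.1 = U.1 ∪ (V.1.1 \ U.1) := by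
      intro V
      exact (Finset.union_sdiff_of_subset V.2.1).symm
    let ψ : Set.Icc U W → {T : Finset (Fin n) // T ∈ D.powerset} := fun V =>
      ⟨V.1.1 \ U.1, Finset.mem_powerset.mpr (Finset.sdiff_subset_sdiff V.2.2 le_rfl)⟩
    have hinj : Function.Injective ψ := by
      intro V₁ V₂ h
      have h' : V₁.1.1 \ U.1 = V₂.1.1 \ U.1 := congrArg Subtype.val h
      have : V₁.1.1 = V₂.1.1 := by rw [hrecover V₁, hrecover V₂, h']
      exact Subtype.ext (Subtype.ext this)
    have hcard1 : Nat.card (Set.Icc U W) = 2 ^ (W.1.card - U.1.card) := by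
      rw [Nat.card_congr e.toEquiv, Nat.card_eq_fintype_card, Fintype.card_finset,
        Fintype.card_fin]
    have hcard2 : Nat.card {T : Finset (Fin n) // T ∈ D.powerset} =
        2 ^ (W.1.card - U.1.card) := by
      rw [Nat.card_eq_fintype_card, Fintype.card_coe, Finset.card_powerset, hD]
    have hbij : Function.Bijective ψ :=
      (Nat.bijective_iff_injective_and_card ψ).mpr ⟨hinj, hcard1.trans hcard2.symm⟩
    intro V hUV hVW
    have hT : V \ U.1 ∈ D.powerset :=
      Finset.mem_powerset.mpr (Finset.sdiff_subset_sdiff hVW le_rfl)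
    obtain ⟨x, hx⟩ := hbij.2 ⟨V \ U.1, hT⟩
    have hx' : x.1.1 \ U.1 = V \ U.1 := congrArg Subtype.val hx
    have : x.1.1 = V := by
      rw [hrecover x, hx', Finset.union_sdiff_of_subset hUV]
    exact this ▸ x.1.2
  · intro hP
    set k := W.1.card - U.1.card with hk
    set D := W.1 \ U.1 with hDdef
    let ι : Fin k ≃ {x // x ∈ D} := (finCongr hD).symm.trans D.equivFin.symm
    let j : Fin k ↪ Fin n :=
      ⟨fun a => (ι a : Fin n), fun a b hab => ι.injective (Subtype.ext hab)⟩
    have hjD : ∀ a, j a ∈ D := fun a => (ι a).2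
    have hDW : D ⊆ W.1 := Finset.sdiff_subset
    have hDU : ∀ x ∈ D, x ∉ U.1 := fun x hx => (Finset.mem_sdiff.mp hx).2
    have hadm : ∀ A : Finset (Fin k), Admissible G J₀ (U.1 ∪ A.map j) := by
      intro A
      refine hP _ Finset.subset_union_left (Finset.union_subset hsub ?_)
      intro x hx
      obtain ⟨a, _, rfl⟩ := Finset.mem_map.mp hx
      exact hDW (hjD a)
    let f : Finset (Fin k) → Set.Icc U W := fun A =>
      ⟨⟨U.1 ∪ A.map j, hadm A⟩,
        ⟨Finset.subset_union_left,
          Finset.union_subset hsub (fun x hx => by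
            obtain ⟨a, _, rfl⟩ := Finset.mem_map.mp hx
            exact hDW (hjD a))⟩⟩
    have hmono : ∀ A B : Finset (Fin k), f A ≤ f B ↔ A ⊆ B := by
      intro A B
      constructor
      · intro hAB a ha
        have h1 : j a ∈ U.1 ∪ B.map j :=
          hAB (Finset.mem_union_right _ (Finset.mem_map_of_mem _ ha))
        rcases Finset.mem_union.mp h1 with h2 | h2
        · exact absurd h2 (hDU _ (hjD a))
        · obtain ⟨b, hb, hba⟩ := Finset.mem_map.mp h2
          exact (j.injective hba) ▸ hb
      · intro hAB
        exact Finset.union_subset_union_right (Finset.map_subset_map.mpr hAB)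
    have hinj : Function.Injective f := by
      intro A B h
      exact Finset.Subset.antisymm ((hmono A B).mp h.le) ((hmono B A).mp h.ge)
    have hsurj : Function.Surjective f := by
      intro V
      refine ⟨Finset.univ.filter (fun a => j a ∈ V.1.1), ?_⟩
      refine Subtype.ext (Subtype.ext ?_)
      refine Finset.Subset.antisymm ?_ ?_
      · refine Finset.union_subset V.2.1 ?_
        intro x hx
        obtain ⟨a, ha, rfl⟩ := Finset.mem_map.mp hx
        exact (Finset.mem_filter.mp ha).2
      · intro x hxV
        by_cases hxU : x ∈ U.1
        · exact Finset.mem_union_left _ hxU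
        · have hxD : x ∈ D := Finset.mem_sdiff.mpr ⟨V.2.2 hxV, hxU⟩
          refine Finset.mem_union_right _ ?_
          refine Finset.mem_map.mpr ⟨ι.symm ⟨x, hxD⟩, ?_, ?_⟩
          · refine Finset.mem_filter.mpr ⟨Finset.mem_univ _, ?_⟩
            show ((ι (ι.symm ⟨x, hxD⟩)) : Fin n) ∈ V.1.1
            rw [Equiv.apply_symm_apply]
            exact hxV
          · show ((ι (ι.symm ⟨x, hxD⟩)) : Fin n) = x
            rw [Equiv.apply_symm_apply]
    exact ⟨({ toEquiv := Equiv.ofBijective f ⟨hinj, hsurj⟩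
              map_rel_iff' := fun {A B} => hmono A B } :
            Finset (Fin k) ≃o Set.Icc U W).symm⟩

end Helpers

open scoped Classical in
theorem stmt_7 (n : ℕ) (hn : 1 ≤ n) (J₀ : Finset (Fin n))
    (μ : CrossSection (pathGraph n) J₀ → CrossSection (pathGraph n) J₀ → ℤ)
    (hrefl : ∀ x, μ x x = 1)
    (hnle : ∀ x y, ¬ x ≤ y → μ x y = 0)
    (hrec : ∀ x y, x < y →
      μ x y = - ∑ z ∈ Finset.univ.filter (fun z => x ≤ z ∧ z < y), μ x z)
    (U W : CrossSection (pathGraph n) J₀) (hUW : U ≤ W) :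
    μ U W =
      if Nonempty (Set.Icc U W ≃o Finset (Fin (W.1.card - U.1.card))) then
        (-1) ^ (W.1.card - U.1.card)
      else 0 := by
  classical
  have key : ∀ (m : ℕ) (W' U' : CrossSection (pathGraph n) J₀), W'.1.card ≤ m → U' ≤ W' →
      μ U' W' = if AllAdm (pathGraph n) J₀ U'.1 W'.1
        then (-1 : ℤ) ^ (W'.1.card - U'.1.card) else 0 := by
    intro m
    induction m with
    | zero =>
      intro W' U' hcard hle
      have hW0 : W'.1 = ∅ := Finset.card_eq_zero.mp (Nat.le_zero.mp hcard)
      have hUW' : U' = W' := by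
        refine Subtype.ext (Finset.Subset.antisymm hle ?_)
        rw [hW0]; exact Finset.empty_subset _
      subst hUW'
      rw [hrefl, if_pos (allAdm_self U'.2), Nat.sub_self, pow_zero]
    | succ m ih =>
      intro W' U' hcard hle
      rcases eq_or_lt_of_le hle with rfl | hlt
      · rw [hrefl, if_pos (allAdm_self U'.2), Nat.sub_self, pow_zero]
      · have hsub : U'.1 ⊆ W'.1 := hle
        have hss : U'.1 ⊂ W'.1 :=
          ⟨hsub, fun h' => hlt.ne (Subtype.ext (Finset.Subset.antisymm hsub h'))⟩
        set D := W'.1 \ U'.1 with hDdef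
        have hDne : D.Nonempty := by
          rw [hDdef, Finset.sdiff_nonempty]
          exact fun h => hss.2 h
        have hDcard : D.card = W'.1.card - U'.1.card := Finset.card_sdiff_of_subset hsub
        set F : Finset (Fin n) → ℤ := fun S =>
          if AllAdm (pathGraph n) J₀ U'.1 (U'.1 ∪ S) then (-1 : ℤ) ^ S.card else 0
          with hFdef
        rw [hrec _ _ hlt]
        -- rewrite each summand using the induction hypothesis
        have hstep1 : ∑ z ∈ Finset.univ.filter (fun z => U' ≤ z ∧ z < W'), μ U' z =
            ∑ z ∈ Finset.univ.filter (fun z => U' ≤ z ∧ z < W'),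
              (if AllAdm (pathGraph n) J₀ U'.1 z.1
                then (-1 : ℤ) ^ (z.1.card - U'.1.card) else 0) := by
          refine Finset.sum_congr rfl (fun z hz => ?_)
          obtain ⟨-, hz1, hz2⟩ := Finset.mem_filter.mp hz
          have hzW : z.1 ⊂ W'.1 := Subtype.coe_lt_coe.mpr hz2
          have : z.1.card < W'.1.card := Finset.card_lt_card hzW
          exact ih z U' (Nat.lt_succ_iff.mp (lt_of_lt_of_le this hcard)) hz1
        -- reindex the sum over subsets of D
        have hstep2 : ∑ z ∈ Finset.univ.filter (fun z => U' ≤ z ∧ z < W'),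
              (if AllAdm (pathGraph n) J₀ U'.1 z.1
                then (-1 : ℤ) ^ (z.1.card - U'.1.card) else 0) =
            ∑ S ∈ (D.powerset.erase D).filter
                (fun S => Admissible (pathGraph n) J₀ (U'.1 ∪ S)), F S := by
          refine Finset.sum_bij (fun z _ => z.1 \ U'.1) ?_ ?_ ?_ ?_
          · intro z hz
            obtain ⟨-, hz1, hz2⟩ := Finset.mem_filter.mp hz
            have hzU : U'.1 ⊆ z.1 := hz1
            have hzW : z.1 ⊆ W'.1 := hz2.le
            show z.1 \ U'.1 ∈ _
            refine Finset.mem_filter.mpr ⟨Finset.mem_erase.mpr ⟨?_, ?_⟩, ?_⟩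
            · intro hEq
              have hEq' : z.1 \ U'.1 = D := hEq
              have : W'.1 ⊆ z.1 := by
                intro x hx
                by_cases hxU : x ∈ U'.1
                · exact hzU hxU
                · have : x ∈ z.1 \ U'.1 := hEq' ▸ Finset.mem_sdiff.mpr ⟨hx, hxU⟩
                  exact (Finset.mem_sdiff.mp this).1
              exact hz2.ne (Subtype.ext (Finset.Subset.antisymm hzW this))
            · exact Finset.mem_powerset.mpr (Finset.sdiff_subset_sdiff hzW le_rfl)
            · rw [Finset.union_sdiff_of_subset hzU]
              exact z.2
          · intro z₁ hz₁ z₂ hz₂ hEq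
            have hEq' : z₁.1 \ U'.1 = z₂.1 \ U'.1 := hEq
            have h1 : U'.1 ⊆ z₁.1 := (Finset.mem_filter.mp hz₁).2.1
            have h2 : U'.1 ⊆ z₂.1 := (Finset.mem_filter.mp hz₂).2.1
            refine Subtype.ext ?_
            rw [← Finset.union_sdiff_of_subset h1, ← Finset.union_sdiff_of_subset h2, hEq']
          · intro S hS
            obtain ⟨hS1, hS2⟩ := Finset.mem_filter.mp hS
            obtain ⟨hSne, hSpow⟩ := Finset.mem_erase.mp hS1
            have hSD : S ⊆ D := Finset.mem_powerset.mp hSpow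
            have hSdisj : Disjoint U'.1 S :=
              Finset.disjoint_left.mpr (fun x hx hxS => (Finset.mem_sdiff.mp (hSD hxS)).2 hx)
            refine ⟨⟨U'.1 ∪ S, hS2⟩, ?_, ?_⟩
            · refine Finset.mem_filter.mpr ⟨Finset.mem_univ _, ?_, ?_⟩
              · exact Finset.subset_union_left
              · refine lt_of_le_of_ne (Finset.union_subset hsub (hSD.trans Finset.sdiff_subset)) ?_
                intro hEq
                apply hSne
                have : (U'.1 ∪ S : Finset (Fin n)) = W'.1 := congrArg Subtype.val hEq
                rw [hDdef, ← this, Finset.union_sdiff_cancel_left hSdisj]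
            · show (U'.1 ∪ S) \ U'.1 = S
              rw [Finset.union_sdiff_cancel_left hSdisj]
          · intro z hz
            have hzU : U'.1 ⊆ z.1 := (Finset.mem_filter.mp hz).2.1
            show _ = F (z.1 \ U'.1)
            rw [hFdef]
            simp only
            rw [Finset.union_sdiff_of_subset hzU, Finset.card_sdiff_of_subset hzU]
        have hDmem : D ∈ D.powerset := Finset.mem_powerset.mpr le_rfl
        have hUD : U'.1 ∪ D = W'.1 := Finset.union_sdiff_of_subset hsub
        -- extend the filtered sum to the full erased powerset
        have hstep3 : ∑ S ∈ (D.powerset.erase D).filter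
              (fun S => Admissible (pathGraph n) J₀ (U'.1 ∪ S)), F S =
            ∑ S ∈ D.powerset.erase D, F S := by
          refine Finset.sum_subset (Finset.filter_subset _ _) ?_
          intro S hS hSf
          have : ¬ Admissible (pathGraph n) J₀ (U'.1 ∪ S) := by
            intro h
            exact hSf (Finset.mem_filter.mpr ⟨hS, h⟩)
          rw [hFdef]
          simp only
          rw [if_neg]
          intro hAll
          exact this (hAll (U'.1 ∪ S) Finset.subset_union_left le_rfl)
        have hstep4 : F D + ∑ S ∈ D.powerset.erase D, F S = ∑ S ∈ D.powerset, F S :=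
          Finset.add_sum_erase _ _ hDmem
        rw [hstep1, hstep2, hstep3]
        by_cases hP : AllAdm (pathGraph n) J₀ U'.1 W'.1
        · -- Boolean case
          have hFall : ∀ S ∈ D.powerset, F S = (-1 : ℤ) ^ S.card := by
            intro S hS
            have hSD : S ⊆ D := Finset.mem_powerset.mp hS
            rw [hFdef]
            simp only
            rw [if_pos]
            intro V h1 h2
            refine hP V h1 (h2.trans ?_)
            rw [← hUD]
            exact Finset.union_subset_union_right hSD
          have hsumall : ∑ S ∈ D.powerset, F S = 0 := by
            rw [Finset.sum_congr rfl hFall]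
            exact Finset.sum_powerset_neg_one_pow_card_of_nonempty hDne
          have hFD : F D = (-1 : ℤ) ^ D.card := hFall D hDmem
          have : ∑ S ∈ D.powerset.erase D, F S = - (-1 : ℤ) ^ D.card := by
            have := hstep4
            rw [hsumall, hFD] at this
            linarith
          rw [this, if_pos hP, neg_neg, hDcard]
        · -- non-Boolean case : sign-reversing involution
          obtain ⟨d, hdD, hdcone⟩ := exists_cone hle hlt.ne
          have hdU : d ∉ U'.1 := (Finset.mem_sdiff.mp hdD).2
          have htoggle : ∀ S : Finset (Fin n), d ∉ S →
              (AllAdm (pathGraph n) J₀ U'.1 (U'.1 ∪ S) ↔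
               AllAdm (pathGraph n) J₀ U'.1 (U'.1 ∪ insert d S)) := by
            intro S hdS
            constructor
            · exact allAdm_insert hdU hdcone
            · exact allAdm_mono (Finset.union_subset_union_right (Finset.subset_insert _ _))
          have hsumall : ∑ S ∈ D.powerset, F S = 0 := by
            refine Finset.sum_involution
              (fun S _ => if d ∈ S then S.erase d else insert d S) ?_ ?_ ?_ ?_
            · intro S hS
              by_cases hdS : d ∈ S
              · simp only [if_pos hdS]
                have hde : d ∉ S.erase d := Finset.notMem_erase _ _
                have hie : insert d (S.erase d) = S := Finset.insert_erase hdS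
                have hiff := (htoggle (S.erase d) hde)
                rw [hie] at hiff
                have hcards : S.card = (S.erase d).card + 1 := by
                  have hpos : 0 < S.card := Finset.card_pos.mpr ⟨d, hdS⟩
                  have h' := Finset.card_erase_of_mem hdS
                  omega
                rw [hFdef]
                simp only
                by_cases hC : AllAdm (pathGraph n) J₀ U'.1 (U'.1 ∪ S)
                · rw [if_pos hC, if_pos (hiff.mpr hC), hcards, pow_succ]
                  ring
                · rw [if_neg hC, if_neg (fun h => hC (hiff.mp h))]
                  ring
              · simp only [if_neg hdS]
                have hiff := htoggle S hdS
                have hcards : (insert d S).card = S.card + 1 :=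
                  Finset.card_insert_of_notMem hdS
                rw [hFdef]
                simp only
                by_cases hC : AllAdm (pathGraph n) J₀ U'.1 (U'.1 ∪ S)
                · rw [if_pos hC, if_pos (hiff.mp hC), hcards, pow_succ]
                  ring
                · rw [if_neg hC, if_neg (fun h => hC (hiff.mpr h))]
                  ring
            · intro S hS hF
              by_cases hdS : d ∈ S
              · simp only [if_pos hdS]
                exact Finset.erase_ne_self.mpr hdS
              · simp only [if_neg hdS]
                exact Finset.insert_ne_self.mpr hdS
            · intro S hS
              have hSD : S ⊆ D := Finset.mem_powerset.mp hS
              by_cases hdS : d ∈ S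
              · simp only [if_pos hdS]
                exact Finset.mem_powerset.mpr ((Finset.erase_subset _ _).trans hSD)
              · simp only [if_neg hdS]
                exact Finset.mem_powerset.mpr (Finset.insert_subset hdD hSD)
            · intro S hS
              by_cases hdS : d ∈ S
              · simp only [if_pos hdS]
                rw [if_neg (Finset.notMem_erase d S), Finset.insert_erase hdS]
              · simp only [if_neg hdS]
                rw [if_pos (Finset.mem_insert_self d S), Finset.erase_insert hdS]
          have hFD : F D = 0 := by
            rw [hFdef]
            simp only
            rw [if_neg]
            rw [hUD]
            exact hP
          have : ∑ S ∈ D.powerset.erase D, F S = 0 := by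
            have := hstep4
            rw [hsumall, hFD] at this
            linarith
          rw [this, if_neg hP, neg_zero]
  have hmain := key W.1.card W U le_rfl hUW
  rw [hmain]
  exact if_congr (icc_iso_iff hUW).symm rfl rfl
end

section
/- Let n ≥ 1, let Pₙ be the path graph on vertices Δ = {α₁,…,αₙ}, and let J₀ ⊆ Δ. The following are equivalent: (1) Λ*(Pₙ,J₀) is closed under intersections, i.e. it is a sublattice (with respect to union and intersection) of the Boolean lattice of all subsets of Δ; (2) Λ*(Pₙ,J₀) is a distributive lattice; (3) Δ − J₀ is a connected subset of Pₙ (i.e. the subgraph of Pₙ induced on Δ − J₀ is connected). -/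
open SimpleGraph Finset

section Helpers

theorem ReachIn.symm' {n : ℕ} {G : SimpleGraph (Fin n)} {U : Finset (Fin n)} {a b : Fin n}
    (h : ReachIn G U a b) : ReachIn G U b a :=
  by
    unfold ReachIn at *
    induction h with
    | refl => exact Relation.ReflTransGen.refl
    | tail _ hxy ih => exact Relation.ReflTransGen.head ⟨hxy.1.symm, hxy.2.2, hxy.2.1⟩ ih

theorem reach_interval {n : ℕ} {U : Finset (Fin n)} {a b : Fin n} (hab : a.val ≤ b.val)
    (h : ∀ c : Fin n, a.val ≤ c.val → c.val ≤ b.val → c ∈ U) :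
    ReachIn (pathGraph n) U a b := by
  obtain ⟨d, hd⟩ : ∃ d, b.val = a.val + d := ⟨b.val - a.val, by omega⟩
  clear hab
  induction d generalizing b with
  | zero =>
    have : a = b := Fin.ext (by omega)
    subst this; exact Relation.ReflTransGen.refl
  | succ k ih =>
    have hlt : a.val + k < n := by have := b.isLt; omega
    have hr : ReachIn (pathGraph n) U a ⟨a.val + k, by omega⟩ :=
      ih (fun c h1 h2 => h c h1 (by simp at h2 ⊢; omega)) rfl
    exact hr.tail ⟨pathGraph_adj.mpr (Or.inl (by simp; omega)),
      h _ (by simp) (by simp; omega), h b (by omega) le_rfl⟩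

theorem reach_mem_between {n : ℕ} {U : Finset (Fin n)} {a b : Fin n} (ha : a ∈ U)
    (h : ReachIn (pathGraph n) U a b) :
    ∀ c : Fin n, (a.val ≤ c.val ∧ c.val ≤ b.val) ∨ (b.val ≤ c.val ∧ c.val ≤ a.val) → c ∈ U := by
  induction h with
  | refl =>
    intro c hc
    have : c = a := Fin.ext (by omega)
    subst this; exact ha
  | @tail b' b hab' step ih =>
    intro c hc
    have hadj := pathGraph_adj.mp step.1
    by_cases hcb : c = b
    · subst hcb; exact step.2.2
    · have hne : c.val ≠ b.val := fun hh => hcb (Fin.ext hh)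
      exact ih c (by omega)

theorem reach_end_cases {n : ℕ} {G : SimpleGraph (Fin n)} {W : Finset (Fin n)} {a b : Fin n}
    (h : ReachIn G W a b) : b = a ∨ b ∈ W := by
  induction h with
  | refl => exact Or.inl rfl
  | tail _ step _ => exact Or.inr step.2.2

theorem closed_of_conn {n : ℕ} {J₀ : Finset (Fin n)}
    (hC : ConnIn (pathGraph n) (Finset.univ \ J₀))
    {U V : Finset (Fin n)} (hU : Admissible (pathGraph n) J₀ U)
    (hV : Admissible (pathGraph n) J₀ V) :
    Admissible (pathGraph n) J₀ (U ∩ V) := by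
  intro a ha
  have haU : a ∈ U := (Finset.mem_inter.mp ha).1
  have haV : a ∈ V := (Finset.mem_inter.mp ha).2
  by_cases haJ : a ∈ J₀
  · obtain ⟨bU, hrU, hbU⟩ := hU a haU
    obtain ⟨bV, hrV, hbV⟩ := hV a haV
    have hBU := reach_mem_between haU hrU
    have hBV := reach_mem_between haV hrV
    have hneU : bU.val ≠ a.val := fun hh => hbU (Fin.ext hh ▸ haJ)
    have hneV : bV.val ≠ a.val := fun hh => hbV (Fin.ext hh ▸ haJ)
    -- opposite sides lead to contradiction
    have hopp : ∀ p q : Fin n, p ∉ J₀ → q ∉ J₀ → p.val < a.val → a.val < q.val → False := by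
      intro p q hp hq h1 h2
      have hr := hC p (Finset.mem_sdiff.mpr ⟨Finset.mem_univ _, hp⟩)
        q (Finset.mem_sdiff.mpr ⟨Finset.mem_univ _, hq⟩)
      have := reach_mem_between (Finset.mem_sdiff.mpr ⟨Finset.mem_univ _, hp⟩) hr a (by omega)
      exact (Finset.mem_sdiff.mp this).2 haJ
    rcases lt_or_gt_of_ne hneU with hU1 | hU1 <;> rcases lt_or_gt_of_ne hneV with hV1 | hV1
    · -- both left of a : take the larger
      by_cases hm : bU.val ≤ bV.val
      · refine ⟨bV, ?_, hbV⟩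
        refine (reach_interval (a := bV) (b := a) (by omega) ?_).symm'
        intro c h1 h2
        exact Finset.mem_inter.mpr ⟨hBU c (by omega), hBV c (by omega)⟩
      · refine ⟨bU, ?_, hbU⟩
        refine (reach_interval (a := bU) (b := a) (by omega) ?_).symm'
        intro c h1 h2
        exact Finset.mem_inter.mpr ⟨hBU c (by omega), hBV c (by omega)⟩
    · exact absurd (hopp bU bV hbU hbV hU1 hV1) (fun h => h)
    · exact absurd (hopp bV bU hbV hbU hV1 hU1) (fun h => h)
    · -- both right of a : take the smaller
      by_cases hm : bU.val ≤ bV.val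
      · refine ⟨bU, ?_, hbU⟩
        refine reach_interval (a := a) (b := bU) (by omega) ?_
        intro c h1 h2
        exact Finset.mem_inter.mpr ⟨hBU c (by omega), hBV c (by omega)⟩
      · refine ⟨bV, ?_, hbV⟩
        refine reach_interval (a := a) (b := bV) (by omega) ?_
        intro c h1 h2
        exact Finset.mem_inter.mpr ⟨hBU c (by omega), hBV c (by omega)⟩
  · exact ⟨a, Relation.ReflTransGen.refl, haJ⟩

theorem distrib_of_closed {n : ℕ} {G : SimpleGraph (Fin n)} {J₀ : Finset (Fin n)}
    (hA : ∀ U V : CrossSection G J₀, Admissible G J₀ (U.1 ∩ V.1)) :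
    ∀ x y z : CrossSection G J₀, x ⊓ (y ⊔ z) = (x ⊓ y) ⊔ (x ⊓ z) := by
  have hinf : ∀ U V : CrossSection G J₀, (U ⊓ V).1 = U.1 ∩ V.1 := by
    intro U V
    apply le_antisymm
    · exact Finset.subset_inter (CrossSection.meetFinset_subset_left G J₀ U.1 V.1)
        (CrossSection.meetFinset_subset_right G J₀ U.1 V.1)
    · exact CrossSection.subset_meetFinset (hA U V) Finset.inter_subset_left
        Finset.inter_subset_right
  intro x y z
  apply Subtype.ext
  show (x ⊓ (y ⊔ z)).1 = ((x ⊓ y) ⊔ (x ⊓ z)).1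
  rw [CrossSection.sup_val, hinf, hinf, hinf, CrossSection.sup_val,
    Finset.inter_union_distrib_left]

theorem conn_of_distrib {n : ℕ} {J₀ : Finset (Fin n)}
    (hB : ∀ x y z : CrossSection (pathGraph n) J₀, x ⊓ (y ⊔ z) = (x ⊓ y) ⊔ (x ⊓ z)) :
    ConnIn (pathGraph n) (Finset.univ \ J₀) := by
  classical
  by_contra hCn
  unfold ConnIn at hCn
  push_neg at hCn
  obtain ⟨p, hp, q, hq, hpq⟩ := hCn
  have hpJ := (Finset.mem_sdiff.mp hp).2
  have hqJ := (Finset.mem_sdiff.mp hq).2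
  -- order them
  obtain ⟨a, b, haJ, hbJ, hab, hnr⟩ :
      ∃ a b : Fin n, a ∉ J₀ ∧ b ∉ J₀ ∧ a.val < b.val ∧
        ¬ ReachIn (pathGraph n) (Finset.univ \ J₀) a b := by
    rcases lt_trichotomy p.val q.val with h | h | h
    · exact ⟨p, q, hpJ, hqJ, h, hpq⟩
    · exact absurd (Fin.ext h ▸ Relation.ReflTransGen.refl) hpq
    · exact ⟨q, p, hqJ, hpJ, h, fun hr => hpq hr.symm'⟩
  -- find a blocking vertex c
  obtain ⟨c, hc1, hc2, hcJ⟩ : ∃ c : Fin n, a.val < c.val ∧ c.val < b.val ∧ c ∈ J₀ := by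
    by_contra hno
    push_neg at hno
    refine hnr (reach_interval (le_of_lt hab) ?_)
    intro v h1 h2
    refine Finset.mem_sdiff.mpr ⟨Finset.mem_univ _, ?_⟩
    rcases eq_or_lt_of_le h1 with h1' | h1'
    · exact (Fin.ext h1'.symm : v = a) ▸ haJ
    rcases eq_or_lt_of_le h2 with h2' | h2'
    · exact (Fin.ext h2' : v = b) ▸ hbJ
    exact hno v h1' h2'
  -- counterexample sets
  set x : Finset (Fin n) := Finset.univ.filter (fun v => a.val ≤ v.val ∧ v.val ≤ c.val) with hxdef
  set y : Finset (Fin n) := Finset.univ.filter (fun v => c.val ≤ v.val ∧ v.val ≤ b.val) with hydef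
  set z : Finset (Fin n) :=
    Finset.univ.filter (fun v => a.val ≤ v.val ∧ v.val ≤ b.val ∧ v ≠ c) with hzdef
  have hmemx : ∀ v : Fin n, v ∈ x ↔ a.val ≤ v.val ∧ v.val ≤ c.val := by
    intro v; simp [hxdef]
  have hmemy : ∀ v : Fin n, v ∈ y ↔ c.val ≤ v.val ∧ v.val ≤ b.val := by
    intro v; simp [hydef]
  have hmemz : ∀ v : Fin n, v ∈ z ↔ a.val ≤ v.val ∧ v.val ≤ b.val ∧ v ≠ c := by
    intro v; simp [hzdef]
  have hx : Admissible (pathGraph n) J₀ x := by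
    intro v hv
    rw [hmemx] at hv
    refine ⟨a, (reach_interval hv.1 ?_).symm', haJ⟩
    intro u h1 h2
    rw [hmemx]; omega
  have hy : Admissible (pathGraph n) J₀ y := by
    intro v hv
    rw [hmemy] at hv
    refine ⟨b, reach_interval hv.2 ?_, hbJ⟩
    intro u h1 h2
    rw [hmemy]; omega
  have hz : Admissible (pathGraph n) J₀ z := by
    intro v hv
    rw [hmemz] at hv
    obtain ⟨h1, h2, h3⟩ := hv
    have h3' : v.val ≠ c.val := fun hh => h3 (Fin.ext hh)
    by_cases hvc : v.val < c.val
    · refine ⟨a, (reach_interval h1 ?_).symm', haJ⟩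
      intro u hu1 hu2
      rw [hmemz]
      exact ⟨hu1, by omega, fun hh => by simp [hh] at hu2; omega⟩
    · refine ⟨b, reach_interval h2 ?_, hbJ⟩
      intro u hu1 hu2
      rw [hmemz]
      refine ⟨by omega, hu2, fun hh => ?_⟩
      subst hh; omega
  set X : CrossSection (pathGraph n) J₀ := ⟨x, hx⟩
  set Y : CrossSection (pathGraph n) J₀ := ⟨y, hy⟩
  set Z : CrossSection (pathGraph n) J₀ := ⟨z, hz⟩
  have hXle : X ≤ Y ⊔ Z := by
    show x ⊆ y ∪ z
    intro v hv
    rw [hmemx] at hv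
    by_cases hvc : v = c
    · exact Finset.mem_union_left _ (by rw [hmemy]; subst hvc; omega)
    · refine Finset.mem_union_right _ ?_
      rw [hmemz]
      have : v.val ≠ c.val := fun hh => hvc (Fin.ext hh)
      exact ⟨hv.1, by omega, hvc⟩
  have hLHS : X ⊓ (Y ⊔ Z) = X := inf_eq_left.mpr hXle
  have hcx : c ∈ (X ⊓ (Y ⊔ Z)).1 := by
    rw [hLHS]; rw [show X.1 = x from rfl, hmemx]; omega
  rw [hB X Y Z] at hcx
  rw [CrossSection.sup_val, Finset.mem_union] at hcx
  rcases hcx with hcx | hcx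
  · -- c in X ⊓ Y : impossible since X.1 ∩ Y.1 ⊆ {c} and {c} not admissible
    have hWsub : (X ⊓ Y).1 ⊆ {c} := by
      intro v hv
      have h1 := CrossSection.meetFinset_subset_left (pathGraph n) J₀ X.1 Y.1 hv
      have h2 := CrossSection.meetFinset_subset_right (pathGraph n) J₀ X.1 Y.1 hv
      rw [show X.1 = x from rfl, hmemx] at h1
      rw [show Y.1 = y from rfl, hmemy] at h2
      exact Finset.mem_singleton.mpr (Fin.ext (by omega))
    obtain ⟨b', hb', hb'J⟩ := (X ⊓ Y).2 c hcx
    rcases reach_end_cases hb' with h | h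
    · exact hb'J (h ▸ hcJ)
    · exact hb'J ((Finset.mem_singleton.mp (hWsub h)) ▸ hcJ)
  · -- c in X ⊓ Z : impossible since (X ⊓ Z).1 ⊆ z and c ∉ z
    have := CrossSection.meetFinset_subset_right (pathGraph n) J₀ X.1 Z.1 hcx
    rw [show Z.1 = z from rfl, hmemz] at this
    exact this.2.2 rfl

end Helpers

theorem stmt_8 (n : ℕ) (hn : 1 ≤ n) (J₀ : Finset (Fin n)) :
    ((∀ U V : CrossSection (pathGraph n) J₀, Admissible (pathGraph n) J₀ (U.1 ∩ V.1)) ↔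
      (∀ x y z : CrossSection (pathGraph n) J₀, x ⊓ (y ⊔ z) = (x ⊓ y) ⊔ (x ⊓ z))) ∧
    ((∀ x y z : CrossSection (pathGraph n) J₀, x ⊓ (y ⊔ z) = (x ⊓ y) ⊔ (x ⊓ z)) ↔
      ConnIn (pathGraph n) (Finset.univ \ J₀)) := by
  have hCA : ConnIn (pathGraph n) (Finset.univ \ J₀) →
      ∀ U V : CrossSection (pathGraph n) J₀, Admissible (pathGraph n) J₀ (U.1 ∩ V.1) :=
    fun hC U V => closed_of_conn hC U.2 V.2
  constructor
  · constructor
    · exact distrib_of_closed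
    · exact fun hB => hCA (conn_of_distrib hB)
  · constructor
    · exact conn_of_distrib
    · exact fun hC => distrib_of_closed (hCA hC)
end

section
/- Let n ≥ 1, let Pₙ be the path graph on vertices Δ = {α₁,…,αₙ}, and let J₀ ⊆ Δ. Suppose Λ*(Pₙ,J₀) is a distributive lattice and |Δ − J₀| > 1. Then Λ*(Pₙ,J₀) is locally rank-symmetric (for every interval [U,W] and every i, the number of elements V ∈ [U,W] with |V| − |U| = i equals the number with |W| − |V| = i), and Λ*(Pₙ,J₀) is order-isomorphic to a product of finite chains. -/
open SimpleGraph Finset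

section Helpers

open Classical

variable {n : ℕ}

theorem reach_mem {G : SimpleGraph (Fin n)} {U : Finset (Fin n)} {a b : Fin n}
    (h : ReachIn G U a b) : b = a ∨ b ∈ U := by
  induction h with
  | refl => exact Or.inl rfl
  | tail _ hstep _ => exact Or.inr hstep.2.2

/-- reach along an interval: all vertices with value in `[a.val, b.val]` are in `U`. -/
theorem reach_up {U : Finset (Fin n)} {a b : Fin n} (hab : a.val ≤ b.val)
    (hall : ∀ m, a.val ≤ m → m ≤ b.val → ∀ h : m < n, (⟨m, h⟩ : Fin n) ∈ U) :
    ReachIn (pathGraph n) U a b := by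
  obtain ⟨d, hd⟩ : ∃ d, b.val = a.val + d := ⟨b.val - a.val, by omega⟩
  clear hab
  induction d generalizing b with
  | zero =>
    have : b = a := Fin.ext (by omega)
    subst this; exact Relation.ReflTransGen.refl
  | succ d ih =>
    have hbn : b.val < n := b.isLt
    have hmid : a.val + d < n := by omega
    have hm : (⟨a.val + d, hmid⟩ : Fin n) ∈ U := hall _ (by omega) (by omega) _
    have hb : b ∈ U := by
      have := hall b.val (by omega) (le_refl _) b.isLt
      simpa using this
    refine Relation.ReflTransGen.tail (ih (b := ⟨a.val + d, hmid⟩) ?_ rfl) ?_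
    · intro m h1 h2 h3; simp only [Fin.val_mk] at h2; exact hall m h1 (by omega) h3
    · refine ⟨?_, hm, hb⟩
      rw [SimpleGraph.pathGraph_adj]; left; simp; omega

theorem reachIn_symm {G : SimpleGraph (Fin n)} {U : Finset (Fin n)} {a b : Fin n}
    (h : ReachIn G U a b) : ReachIn G U b a := by
  induction h with
  | refl => exact Relation.ReflTransGen.refl
  | tail _ hstep ih =>
    exact Relation.ReflTransGen.head ⟨hstep.1.symm, hstep.2.2, hstep.2.1⟩ ih

/-- If vertex `t+1` is missing from `U` and `a.val ≤ t`, reachability stays `≤ t`. -/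
theorem reach_blocked_above {U : Finset (Fin n)} {a b : Fin n} {t : ℕ}
    (ha : a.val ≤ t) (hblock : ∀ h : t + 1 < n, (⟨t + 1, h⟩ : Fin n) ∉ U)
    (h : ReachIn (pathGraph n) U a b) : b.val ≤ t := by
  induction h with
  | refl => exact ha
  | @tail x y _ hstep ih =>
    rcases SimpleGraph.pathGraph_adj.mp hstep.1 with h1 | h1
    · -- x.val + 1 = y.val
      by_contra hy
      have hyt : y.val = t + 1 := by omega
      exact hblock (hyt ▸ y.isLt) (by
        have : y = (⟨t+1, hyt ▸ y.isLt⟩ : Fin n) := Fin.ext hyt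
        rw [← this]; exact hstep.2.2)
    · omega

theorem reach_blocked_below {U : Finset (Fin n)} {a b : Fin n} {t : ℕ}
    (ha : t ≤ a.val) (ht : 1 ≤ t) (hblock : ∀ h : t - 1 < n, (⟨t - 1, h⟩ : Fin n) ∉ U)
    (h : ReachIn (pathGraph n) U a b) : t ≤ b.val := by
  induction h with
  | refl => exact ha
  | @tail x y _ hstep ih =>
    rcases SimpleGraph.pathGraph_adj.mp hstep.1 with h1 | h1
    · omega
    · by_contra hy
      have hyt : y.val = t - 1 := by omega
      exact hblock (hyt ▸ y.isLt) (by
        have : y = (⟨t-1, hyt ▸ y.isLt⟩ : Fin n) := Fin.ext hyt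
        rw [← this]; exact hstep.2.2)

end Helpers
section NoGap

open Classical

variable {n : ℕ} {J₀ : Finset (Fin n)}

theorem no_gap
    (hdist : ∀ x y z : CrossSection (pathGraph n) J₀,
      x ⊓ (y ⊔ z) = (x ⊓ y) ⊔ (x ⊓ z))
    (f1 f2 : Fin n) (hf1 : f1 ∉ J₀) (hf2 : f2 ∉ J₀) (hlt : f1.val + 1 < f2.val)
    (hgap : ∀ v : Fin n, f1.val < v.val → v.val < f2.val → v ∈ J₀) : False := by
  classical
  set x : Finset (Fin n) := Finset.univ.filter (fun v => f1.val ≤ v.val ∧ v.val < f2.val) with hxdef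
  set y : Finset (Fin n) := Finset.univ.filter (fun v => f1.val < v.val ∧ v.val ≤ f2.val) with hydef
  have hmemx : ∀ v : Fin n, v ∈ x ↔ f1.val ≤ v.val ∧ v.val < f2.val := by
    intro v; simp [hxdef]
  have hmemy : ∀ v : Fin n, v ∈ y ↔ f1.val < v.val ∧ v.val ≤ f2.val := by
    intro v; simp [hydef]
  have hax : Admissible (pathGraph n) J₀ x := by
    intro a ha
    refine ⟨f1, reachIn_symm (reach_up ((hmemx a).mp ha).1 ?_), hf1⟩
    intro m hm1 hm2 h
    exact (hmemx _).mpr ⟨hm1, lt_of_le_of_lt hm2 ((hmemx a).mp ha).2⟩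
  have hay : Admissible (pathGraph n) J₀ y := by
    intro a ha
    refine ⟨f2, reach_up ((hmemy a).mp ha).2 ?_, hf2⟩
    intro m hm1 hm2 h
    exact (hmemy _).mpr ⟨lt_of_lt_of_le ((hmemy a).mp ha).1 hm1, hm2⟩
  have haz : Admissible (pathGraph n) J₀ {f1} := by
    intro a ha
    exact ⟨f1, by simp at ha; subst ha; exact Relation.ReflTransGen.refl, hf1⟩
  set xc : CrossSection (pathGraph n) J₀ := ⟨x, hax⟩
  set yc : CrossSection (pathGraph n) J₀ := ⟨y, hay⟩
  set zc : CrossSection (pathGraph n) J₀ := ⟨{f1}, haz⟩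
  have hxle : xc ≤ yc ⊔ zc := by
    show x ⊆ y ∪ {f1}
    intro v hv
    rcases ((hmemx v).mp hv) with ⟨hv1, hv2⟩
    rcases eq_or_lt_of_le hv1 with h | h
    · exact Finset.mem_union_right _ (by simp [Fin.ext (h.symm : v.val = f1.val)])
    · exact Finset.mem_union_left _ ((hmemy v).mpr ⟨h, le_of_lt hv2⟩)
  have h1 : xc ⊓ (yc ⊔ zc) = xc := inf_eq_left.mpr hxle
  have h2 : xc ⊓ zc = zc := by
    refine inf_eq_right.mpr ?_
    show ({f1} : Finset (Fin n)) ⊆ x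
    simp only [Finset.singleton_subset_iff]
    exact (hmemx f1).mpr ⟨le_refl _, by omega⟩
  have h3 : xc ⊓ yc = ⟨∅, admissible_empty _ _⟩ := by
    apply Subtype.ext
    show CrossSection.meetFinset (pathGraph n) J₀ x y = ∅
    rw [Finset.eq_empty_iff_forall_notMem]
    intro a ha
    have hadm := CrossSection.admissible_meetFinset (pathGraph n) J₀ x y
    obtain ⟨b, hb, hbJ⟩ := hadm a ha
    have hbm : b ∈ CrossSection.meetFinset (pathGraph n) J₀ x y := by
      rcases reach_mem hb with h | h
      · rwa [h]
      · exact h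
    have hbx := CrossSection.meetFinset_subset_left (pathGraph n) J₀ x y hbm
    have hby := CrossSection.meetFinset_subset_right (pathGraph n) J₀ x y hbm
    exact hbJ (hgap b ((hmemy b).mp hby).1 ((hmemx b).mp hbx).2)
  have := hdist xc yc zc
  rw [h1, h2, h3] at this
  have hval : x = (∅ : Finset (Fin n)) ∪ {f1} := congrArg Subtype.val this
  rw [Finset.empty_union] at hval
  have : (⟨f1.val + 1, by omega⟩ : Fin n) ∈ x := (hmemx _).mpr ⟨Nat.le_succ _, hlt⟩
  rw [hval] at this
  simp only [Finset.mem_singleton] at this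
  have := congrArg Fin.val this
  simp at this
end NoGap
section Coord

open Classical

variable {n : ℕ} {J₀ : Finset (Fin n)}

/-- closure conditions characterizing admissibility when the free vertices are `[L,R]`. -/
def GoodLR (L R : ℕ) (U : Finset (Fin n)) : Prop :=
  (∀ v : Fin n, v ∈ U → v.val < L → ∀ h : v.val + 1 < n, (⟨v.val + 1, h⟩ : Fin n) ∈ U) ∧
  (∀ v : Fin n, v ∈ U → R < v.val →
    (⟨v.val - 1, Nat.lt_of_le_of_lt (Nat.sub_le _ _) v.isLt⟩ : Fin n) ∈ U)

theorem good_chain_up {L R : ℕ} {U : Finset (Fin n)} (hg : GoodLR L R U)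
    {a : Fin n} (ha : a ∈ U) : ∀ m, a.val ≤ m → m ≤ L → ∀ h : m < n, (⟨m, h⟩ : Fin n) ∈ U := by
  intro m hm1 hm2 h
  obtain ⟨d, hd⟩ : ∃ d, m = a.val + d := ⟨m - a.val, by omega⟩
  subst hd
  clear hm1
  induction d with
  | zero => simpa using ha
  | succ d ih =>
    have h' : a.val + d < n := by omega
    have hmem := ih (by omega) h'
    have := hg.1 ⟨a.val + d, h'⟩ hmem (by simp; omega) (by show a.val + d + 1 < n; omega)
    have he : (⟨a.val + (d + 1), h⟩ : Fin n) = ⟨a.val + d + 1, by omega⟩ := Fin.ext (by simp; omega)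
    rw [he]; exact this

theorem good_chain_down {L R : ℕ} {U : Finset (Fin n)} (hg : GoodLR L R U)
    {a : Fin n} (ha : a ∈ U) : ∀ m, R ≤ m → m ≤ a.val → ∀ h : m < n, (⟨m, h⟩ : Fin n) ∈ U := by
  suffices H : ∀ d m, m = a.val - d → R ≤ m → m ≤ a.val → ∀ h : m < n, (⟨m, h⟩ : Fin n) ∈ U by
    intro m hm1 hm2 h; exact H (a.val - m) m (by omega) hm1 hm2 h
  intro d
  induction d with
  | zero =>
    intro m hm _ _ h
    have : m = a.val := by omega
    subst this; simpa using ha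
  | succ d ih =>
    intro m hm hm1 hm2 h
    rcases Nat.lt_or_ge a.val (d + 1) with hc | hc
    · have : m = a.val - d := by omega
      exact ih m this hm1 hm2 h
    · have h' : a.val - d < n := Nat.lt_of_le_of_lt (Nat.sub_le _ _) a.isLt
      have hmem := ih (a.val - d) rfl (by omega) (by omega) h'
      have hval : R < a.val - d := by omega
      have := hg.2 ⟨a.val - d, h'⟩ hmem (by simpa using hval)
      have he : a.val - d - 1 = m := by omega
      simpa [he] using this

variable {L R : ℕ}

theorem adm_iff_good (hLR : L < R) (hRn : R < n)
    (hfree : ∀ m (h : m < n), L ≤ m → m ≤ R → (⟨m, h⟩ : Fin n) ∉ J₀)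
    (hmin : ∀ v : Fin n, v ∉ J₀ → L ≤ v.val ∧ v.val ≤ R)
    (U : Finset (Fin n)) :
    Admissible (pathGraph n) J₀ U ↔ GoodLR L R U := by
  constructor
  · intro hadm
    constructor
    · intro v hv hvL h
      by_contra hnot
      obtain ⟨b, hb, hbJ⟩ := hadm v hv
      have hbL : L ≤ b.val := (hmin b hbJ).1
      have := reach_blocked_above (t := v.val) le_rfl (fun h' hmem => by
        exact hnot (by convert hmem)) hb
      omega
    · intro v hv hvR
      by_contra hnot
      obtain ⟨b, hb, hbJ⟩ := hadm v hv
      have hbR : b.val ≤ R := (hmin b hbJ).2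
      have := reach_blocked_below (t := v.val) le_rfl (by omega) (fun h' hmem => by
        exact hnot (by convert hmem)) hb
      omega
  · intro hg a ha
    rcases lt_or_ge a.val L with haL | haL
    · refine ⟨⟨L, lt_trans hLR hRn⟩, ?_, hfree L _ le_rfl (le_of_lt hLR)⟩
      exact reach_up (by simp; omega) (fun m h1 h2 h => good_chain_up hg ha m h1 (by simpa using h2) h)
    · rcases le_or_gt a.val R with haR | haR
      · refine ⟨a, Relation.ReflTransGen.refl, ?_⟩
        have := hfree a.val a.isLt haL haR
        simpa using this
      · refine ⟨⟨R, hRn⟩, reachIn_symm (reach_up (by simp; omega) ?_), hfree R _ (le_of_lt hLR) le_rfl⟩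
        intro m h1 h2 h
        exact good_chain_down hg ha m (by simpa using h1) h2 h

end Coord
section CoordDefs

open Classical Finset

variable {n : ℕ}

theorem card_val_Icc (s t : ℕ) (ht : t < n) :
    (Finset.univ.filter (fun w : Fin n => s ≤ w.val ∧ w.val ≤ t)).card = t + 1 - s := by
  rcases le_or_gt s t with h | h
  · have hs : s < n := by omega
    have he : Finset.univ.filter (fun w : Fin n => s ≤ w.val ∧ w.val ≤ t)
        = Finset.Icc ⟨s, hs⟩ ⟨t, ht⟩ := by
      ext w; simp [Fin.le_def]
    rw [he, Fin.card_Icc]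
  · have he : Finset.univ.filter (fun w : Fin n => s ≤ w.val ∧ w.val ≤ t) = ∅ := by
      rw [Finset.filter_eq_empty_iff]; intro w _; omega
    rw [he]; simp; omega

variable (L R : ℕ)

/-- the coordinates of an admissible set. -/
noncomputable def coordN (U : Finset (Fin n)) (i : ℕ) : ℕ :=
  if i = 0 then (U.filter (fun v => v.val ≤ L)).card
  else if i = R - L then (U.filter (fun v => R ≤ v.val)).card
  else if h : L + i < n then (if (⟨L + i, h⟩ : Fin n) ∈ U then 1 else 0)
  else 0

/-- the admissible set with given coordinates. -/
noncomputable def gsetP (X : ℕ → ℕ) : Finset (Fin n) :=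
  Finset.univ.filter (fun v =>
    if v.val ≤ L then L < v.val + X 0
    else if R ≤ v.val then v.val < R + X (R - L)
    else X (v.val - L) = 1)

theorem mem_gsetP (X : ℕ → ℕ) (v : Fin n) :
    v ∈ gsetP L R X ↔
      (if v.val ≤ L then L < v.val + X 0
       else if R ≤ v.val then v.val < R + X (R - L)
       else X (v.val - L) = 1) := by
  simp [gsetP]

variable {L R}

theorem good_gsetP (hLR : L < R) (X : ℕ → ℕ) : GoodLR L R (gsetP (n := n) L R X) := by
  constructor
  · intro v hv hvL h
    rw [mem_gsetP] at hv ⊢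
    simp only [Fin.val_mk]
    rw [if_pos (by omega)] at hv
    rw [if_pos (by omega : v.val + 1 ≤ L)]
    omega
  · intro v hv hvR
    rw [mem_gsetP] at hv ⊢
    simp only [Fin.val_mk]
    rw [if_neg (by omega), if_pos (by omega)] at hv
    rw [if_neg (by omega : ¬ (v.val - 1 ≤ L)), if_pos (by omega : R ≤ v.val - 1)]
    omega

theorem mem_left_iff {U : Finset (Fin n)} (hg : GoodLR L R U) {v : Fin n} (hvL : v.val ≤ L)
    (hLn : L < n) :
    v ∈ U ↔ L < v.val + (U.filter (fun w => w.val ≤ L)).card := by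
  constructor
  · intro hv
    have hsub : Finset.univ.filter (fun w : Fin n => v.val ≤ w.val ∧ w.val ≤ L)
        ⊆ U.filter (fun w => w.val ≤ L) := by
      intro w hw
      simp only [Finset.mem_filter, Finset.mem_univ, true_and] at hw ⊢
      refine ⟨?_, hw.2⟩
      have := good_chain_up hg hv w.val hw.1 hw.2 w.isLt
      simpa using this
    have := Finset.card_le_card hsub
    rw [card_val_Icc _ _ (by omega)] at this
    omega
  · intro hcard
    by_contra hv
    have hsub : U.filter (fun w => w.val ≤ L)
        ⊆ Finset.univ.filter (fun w : Fin n => v.val + 1 ≤ w.val ∧ w.val ≤ L) := by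
      intro w hw
      simp only [Finset.mem_filter, Finset.mem_univ, true_and] at hw ⊢
      refine ⟨?_, hw.2⟩
      by_contra hlt
      have hwv : w.val ≤ v.val := by omega
      have := good_chain_up hg hw.1 v.val hwv hvL v.isLt
      simp only [Fin.eta] at this
      exact hv this
    have := Finset.card_le_card hsub
    rw [card_val_Icc _ _ (by omega)] at this
    omega

theorem mem_right_iff {U : Finset (Fin n)} (hg : GoodLR L R U) {v : Fin n} (hvR : R ≤ v.val) :
    v ∈ U ↔ v.val < R + (U.filter (fun w => R ≤ w.val)).card := by
  constructor
  · intro hv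
    have hsub : Finset.univ.filter (fun w : Fin n => R ≤ w.val ∧ w.val ≤ v.val)
        ⊆ U.filter (fun w => R ≤ w.val) := by
      intro w hw
      simp only [Finset.mem_filter, Finset.mem_univ, true_and] at hw ⊢
      refine ⟨?_, hw.1⟩
      have := good_chain_down hg hv w.val hw.1 hw.2 w.isLt
      simpa using this
    have := Finset.card_le_card hsub
    rw [card_val_Icc _ _ v.isLt] at this
    omega
  · intro hcard
    by_contra hv
    rcases eq_or_lt_of_le hvR with hve | hvlt
    · have hemp : U.filter (fun w => R ≤ w.val) = ∅ := by
        rw [Finset.filter_eq_empty_iff]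
        intro w hw hRw
        have := good_chain_down hg hw v.val hvR (hve ▸ hRw) v.isLt
        simp only [Fin.eta] at this
        exact hv this
      rw [hemp] at hcard
      simp at hcard
      omega
    · have hsub : U.filter (fun w => R ≤ w.val)
          ⊆ Finset.univ.filter (fun w : Fin n => R ≤ w.val ∧ w.val ≤ v.val - 1) := by
        intro w hw
        simp only [Finset.mem_filter, Finset.mem_univ, true_and] at hw ⊢
        refine ⟨hw.2, ?_⟩
        by_contra hlt
        have hwv : v.val ≤ w.val := by omega
        have := good_chain_down hg hw.1 v.val hvR hwv v.isLt
        simp only [Fin.eta] at this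
        exact hv this
      have := Finset.card_le_card hsub
      rw [card_val_Icc _ _ (Nat.lt_of_le_of_lt (Nat.sub_le _ _) v.isLt)] at this
      omega

theorem coord_bound_left (hLn : L < n) (U : Finset (Fin n)) :
    (U.filter (fun v => v.val ≤ L)).card ≤ L + 1 := by
  have hsub : U.filter (fun v => v.val ≤ L)
      ⊆ Finset.univ.filter (fun w : Fin n => 0 ≤ w.val ∧ w.val ≤ L) := by
    intro w hw
    simp only [Finset.mem_filter] at hw ⊢
    exact ⟨Finset.mem_univ _, Nat.zero_le _, hw.2⟩
  have := Finset.card_le_card hsub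
  rw [card_val_Icc _ _ hLn] at this
  omega

theorem coord_bound_right (hRn : R < n) (U : Finset (Fin n)) :
    (U.filter (fun v => R ≤ v.val)).card ≤ n - R := by
  have hsub : U.filter (fun v => R ≤ v.val)
      ⊆ Finset.univ.filter (fun w : Fin n => R ≤ w.val ∧ w.val ≤ n - 1) := by
    intro w hw
    simp only [Finset.mem_filter] at hw ⊢
    exact ⟨Finset.mem_univ _, hw.2, by omega⟩
  have := Finset.card_le_card hsub
  rw [card_val_Icc _ _ (by omega : n - 1 < n)] at this
  omega

theorem coord_bound_mid (U : Finset (Fin n)) (i : ℕ) (h0 : i ≠ 0) (hk : i ≠ R - L) :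
    coordN L R U i ≤ 1 := by
  rw [coordN, if_neg h0, if_neg hk]
  split
  · split <;> omega
  · omega

end CoordDefs
section CoordMain

open Classical Finset

variable {n L R : ℕ}

theorem coordN_mid {U : Finset (Fin n)} {v : Fin n} (h1 : L < v.val) (h2 : v.val < R) :
    coordN L R U (v.val - L) = if v ∈ U then 1 else 0 := by
  have hin : L + (v.val - L) < n := by omega
  have hve : (⟨L + (v.val - L), hin⟩ : Fin n) = v := Fin.ext (by simp; omega)
  rw [coordN, if_neg (by omega), if_neg (by omega), dif_pos hin, hve]

theorem coordN_zero (U : Finset (Fin n)) :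
    coordN L R U 0 = (U.filter (fun v => v.val ≤ L)).card := by
  rw [coordN, if_pos rfl]

theorem coordN_last (hLR : L < R) (U : Finset (Fin n)) :
    coordN L R U (R - L) = (U.filter (fun v => R ≤ v.val)).card := by
  rw [coordN, if_neg (by omega), if_pos rfl]

theorem gset_coord_eq (hLR : L < R) (hRn : R < n) {U : Finset (Fin n)} (hg : GoodLR L R U) :
    gsetP L R (coordN L R U) = U := by
  ext v
  rw [mem_gsetP]
  rcases le_or_gt v.val L with hvL | hvL
  · rw [if_pos hvL, coordN_zero]
    exact (mem_left_iff hg hvL (by omega)).symm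
  · rw [if_neg (by omega)]
    rcases le_or_gt R v.val with hvR | hvR
    · rw [if_pos hvR, coordN_last hLR]
      exact (mem_right_iff hg hvR).symm
    · rw [if_neg (by omega), coordN_mid hvL hvR]
      by_cases hm : v ∈ U
      · simp [hm]
      · simp [hm]

theorem coord_gsetP_eq (hLR : L < R) (hRn : R < n) (X : ℕ → ℕ)
    (h0 : X 0 ≤ L + 1) (hk : X (R - L) ≤ n - R)
    (hmid : ∀ i, i ≠ 0 → i ≠ R - L → X i ≤ 1) :
    ∀ i, i ≤ R - L → coordN L R (gsetP (n := n) L R X) i = X i := by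
  intro i hi
  rcases eq_or_ne i 0 with h | hi0
  · subst h
    rw [coordN_zero]
    have he : (gsetP (n := n) L R X).filter (fun v => v.val ≤ L)
        = Finset.univ.filter (fun w : Fin n => L + 1 - X 0 ≤ w.val ∧ w.val ≤ L) := by
      ext w
      simp only [Finset.mem_filter, Finset.mem_univ, true_and, mem_gsetP]
      by_cases hw : w.val ≤ L
      · simp only [if_pos hw]; omega
      · simp only [if_neg hw]; omega
    rw [he, card_val_Icc _ _ (by omega : L < n)]
    omega
  · rcases eq_or_ne i (R - L) with h | hik
    · subst h
      rw [coordN_last hLR]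
      have he : (gsetP (n := n) L R X).filter (fun v => R ≤ v.val)
          = Finset.univ.filter (fun w : Fin n => R ≤ w.val ∧ w.val ≤ R + X (R - L) - 1) := by
        ext w
        simp only [Finset.mem_filter, Finset.mem_univ, true_and, mem_gsetP]
        by_cases hw : w.val ≤ L
        · simp only [if_pos hw]; omega
        · by_cases hw2 : R ≤ w.val
          · simp only [if_neg hw, if_pos hw2]; omega
          · simp only [if_neg hw, if_neg hw2]
            constructor
            · rintro ⟨-, h⟩; omega
            · rintro ⟨h, -⟩; omega
      rw [he, card_val_Icc _ _ (by omega : R + X (R - L) - 1 < n)]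
      omega
    · have hiRL : i < R - L := by omega
      have hin : L + i < n := by omega
      rw [coordN, if_neg hi0, if_neg hik, dif_pos hin]
      simp only [mem_gsetP, Fin.val_mk, if_neg (by omega : ¬ (L + i ≤ L)),
        if_neg (by omega : ¬ (R ≤ L + i)), show L + i - L = i from by omega]
      have := hmid i hi0 hik
      by_cases hx : X i = 1
      · rw [if_pos hx]; omega
      · rw [if_neg hx]; omega

theorem coord_mono {U V : Finset (Fin n)} (hUV : U ⊆ V) (i : ℕ) :
    coordN L R U i ≤ coordN L R V i := by
  rcases eq_or_ne i 0 with h | h0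
  · subst h; rw [coordN_zero, coordN_zero]
    exact Finset.card_le_card (Finset.filter_subset_filter _ hUV)
  · rcases eq_or_ne i (R - L) with h | hk
    · subst h; rw [coordN, coordN, if_neg h0, if_neg h0, if_pos rfl, if_pos rfl]
      exact Finset.card_le_card (Finset.filter_subset_filter _ hUV)
    · rw [coordN, coordN, if_neg h0, if_neg h0, if_neg hk, if_neg hk]
      rcases Nat.lt_or_ge (L + i) n with hin | hin
      · rw [dif_pos hin, dif_pos hin]
        by_cases hm : (⟨L + i, hin⟩ : Fin n) ∈ U
        · rw [if_pos hm, if_pos (hUV hm)]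
        · rw [if_neg hm]; exact Nat.zero_le _
      · rw [dif_neg (by omega), dif_neg (by omega)]

theorem subset_of_coord_le (hLR : L < R) (hRn : R < n) {U V : Finset (Fin n)}
    (hgU : GoodLR L R U) (hgV : GoodLR L R V)
    (h : ∀ i, i ≤ R - L → coordN L R U i ≤ coordN L R V i) : U ⊆ V := by
  intro v hv
  rcases le_or_gt v.val L with hvL | hvL
  · rw [mem_left_iff hgU hvL (by omega)] at hv
    rw [mem_left_iff hgV hvL (by omega)]
    have h0 := h 0 (Nat.zero_le _)
    rw [coordN_zero, coordN_zero] at h0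
    omega
  · rcases le_or_gt R v.val with hvR | hvR
    · rw [mem_right_iff hgU hvR] at hv
      rw [mem_right_iff hgV hvR]
      have h0 := h (R - L) le_rfl
      rw [coordN_last hLR, coordN_last hLR] at h0
      omega
    · have h0 := h (v.val - L) (by omega)
      rw [coordN_mid hvL hvR, coordN_mid hvL hvR, if_pos hv] at h0
      by_contra hc
      rw [if_neg hc] at h0
      omega

theorem cardSum (hLR : L < R) (hRn : R < n) (U : Finset (Fin n)) :
    U.card = ∑ i ∈ Finset.range (R - L + 1), coordN L R U i := by
  have hk1 : 1 ≤ R - L := by omega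
  rw [Finset.sum_range_succ]
  have hrange : Finset.range (R - L) = insert 0 (Finset.Ioo 0 (R - L)) := by
    ext i; simp only [Finset.mem_range, Finset.mem_insert, Finset.mem_Ioo]; omega
  rw [hrange, Finset.sum_insert (by simp), coordN_zero, coordN_last hLR]
  have hmid : ∑ i ∈ Finset.Ioo 0 (R - L), coordN L R U i
      = (U.filter (fun v => L < v.val ∧ v.val < R)).card := by
    have hcongr : ∀ i ∈ Finset.Ioo 0 (R - L), coordN L R U i
        = if (∃ h : L + i < n, (⟨L + i, h⟩ : Fin n) ∈ U) then 1 else 0 := by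
      intro i hi
      simp only [Finset.mem_Ioo] at hi
      have hin : L + i < n := by omega
      rw [coordN, if_neg (by omega), if_neg (by omega), dif_pos hin]
      by_cases hm : (⟨L + i, hin⟩ : Fin n) ∈ U
      · rw [if_pos hm, if_pos ⟨hin, hm⟩]
      · rw [if_neg hm, if_neg (fun hc => hm hc.choose_spec)]
    rw [Finset.sum_congr rfl hcongr, Finset.sum_boole]
    push_cast
    apply Finset.card_bij (fun i hi => (⟨L + i, by
      have := (Finset.mem_filter.mp hi).1
      simp only [Finset.mem_Ioo] at this
      omega⟩ : Fin n))
    · intro i hi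
      have h1 := (Finset.mem_filter.mp hi).1
      have h2 := (Finset.mem_filter.mp hi).2
      simp only [Finset.mem_Ioo] at h1
      simp only [Finset.mem_filter, Fin.val_mk]
      exact ⟨h2.choose_spec, by omega, by omega⟩
    · intro i1 h1 i2 h2 he
      have := congrArg Fin.val he
      simp only [Fin.val_mk] at this
      omega
    · intro v hv
      simp only [Finset.mem_filter] at hv
      refine ⟨v.val - L, Finset.mem_filter.mpr ⟨Finset.mem_Ioo.mpr ⟨by omega, by omega⟩, ?_⟩, ?_⟩
      · exact ⟨by omega, by
          have hve : (⟨L + (v.val - L), by omega⟩ : Fin n) = v := Fin.ext (by simp; omega)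
          rw [hve]; exact hv.1⟩
      · exact Fin.ext (by simp; omega)
  rw [hmid]
  have hs1 := Finset.card_filter_add_card_filter_not
    (s := U) (p := fun v => v.val ≤ L)
  have hs2 := Finset.card_filter_add_card_filter_not
    (s := U.filter (fun v => ¬ v.val ≤ L)) (p := fun v => R ≤ v.val)
  rw [Finset.filter_filter, Finset.filter_filter] at hs2
  have he1 : U.filter (fun v => ¬ v.val ≤ L ∧ R ≤ v.val) = U.filter (fun v => R ≤ v.val) := by
    ext v; simp only [Finset.mem_filter]; constructor
    · rintro ⟨h1, -, h2⟩; exact ⟨h1, h2⟩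
    · rintro ⟨h1, h2⟩; exact ⟨h1, by omega, h2⟩
  have he2 : U.filter (fun v => ¬ v.val ≤ L ∧ ¬ R ≤ v.val)
      = U.filter (fun v => L < v.val ∧ v.val < R) := by
    ext v; simp only [Finset.mem_filter]; constructor
    · rintro ⟨h1, h2, h3⟩; exact ⟨h1, by omega, by omega⟩
    · rintro ⟨h1, h2, h3⟩; exact ⟨h1, by omega, by omega⟩
  rw [he1, he2] at hs2
  omega

end CoordMain
section Package

open Classical Finset

/-- lengths of the chains. -/
def chainLen (n L R : ℕ) (i : ℕ) : ℕ :=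
  if i = 0 then L + 2 else if i = R - L then n - R + 1 else 2

theorem chainLen_zero (n L R : ℕ) : chainLen n L R 0 = L + 2 := if_pos rfl

theorem chainLen_last {L R : ℕ} (n : ℕ) (hLR : L < R) : chainLen n L R (R - L) = n - R + 1 := by
  rw [chainLen, if_neg (by omega), if_pos rfl]

theorem chainLen_mid (n : ℕ) {L R i : ℕ} (h0 : i ≠ 0) (hk : i ≠ R - L) :
    chainLen n L R i = 2 := by
  rw [chainLen, if_neg h0, if_neg hk]

theorem chainLen_pos (n L R i : ℕ) : 1 ≤ chainLen n L R i := by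
  rw [chainLen]; split
  · omega
  · split <;> omega

variable {n L R : ℕ}

theorem coordN_lt (hLR : L < R) (hRn : R < n) (U : Finset (Fin n)) (i : ℕ) :
    coordN L R U i < chainLen n L R i := by
  rcases eq_or_ne i 0 with h | h0
  · subst h; rw [coordN_zero, chainLen, if_pos rfl]
    have := coord_bound_left (by omega : L < n) U; omega
  · rcases eq_or_ne i (R - L) with h | hk
    · subst h; rw [coordN_last hLR, chainLen, if_neg h0, if_pos rfl]
      have := coord_bound_right hRn U; omega
    · rw [chainLen, if_neg h0, if_neg hk]
      have := coord_bound_mid (L := L) (R := R) U i h0 hk; omega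

theorem gsetP_congr {X Y : ℕ → ℕ} (hLR : L < R)
    (h : ∀ i, i ≤ R - L → X i = Y i) : gsetP (n := n) L R X = gsetP L R Y := by
  ext v; rw [mem_gsetP, mem_gsetP]
  by_cases h1 : v.val ≤ L
  · rw [if_pos h1, if_pos h1, h 0 (Nat.zero_le _)]
  · by_cases h2 : R ≤ v.val
    · rw [if_neg h1, if_neg h1, if_pos h2, if_pos h2, h (R - L) le_rfl]
    · rw [if_neg h1, if_neg h1, if_neg h2, if_neg h2, h (v.val - L) (by omega)]

variable {J₀ : Finset (Fin n)}

/-- The coordinate map on the cross-section lattice. -/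
noncomputable def fC (hLR : L < R) (hRn : R < n) (U : CrossSection (pathGraph n) J₀)
    (i : Fin (R - L + 1)) : Fin (chainLen n L R i.val) :=
  ⟨coordN L R U.1 i.val, coordN_lt hLR hRn U.1 i.val⟩

/-- Its inverse. -/
noncomputable def gC (hLR : L < R)
    (hadm : ∀ U : Finset (Fin n), Admissible (pathGraph n) J₀ U ↔ GoodLR L R U)
    (x : (i : Fin (R - L + 1)) → Fin (chainLen n L R i.val)) : CrossSection (pathGraph n) J₀ :=
  ⟨gsetP L R (fun i => if h : i < R - L + 1 then (x ⟨i, h⟩).val else 0),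
   (hadm _).mpr (good_gsetP hLR _)⟩

theorem gC_fC (hLR : L < R) (hRn : R < n)
    (hadm : ∀ U : Finset (Fin n), Admissible (pathGraph n) J₀ U ↔ GoodLR L R U)
    (U : CrossSection (pathGraph n) J₀) : gC hLR hadm (fC hLR hRn U) = U := by
  have he := gsetP_congr (n := n) hLR
    (X := fun i => if h : i < R - L + 1 then (fC hLR hRn U ⟨i, h⟩).val else 0)
    (Y := coordN L R U.1) (fun i hi => by
      simp only [dif_pos (show i < R - L + 1 from by omega)]; rfl)
  exact Subtype.ext (he.trans (gset_coord_eq hLR hRn ((hadm U.1).mp U.2)))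

theorem fC_gC (hLR : L < R) (hRn : R < n)
    (hadm : ∀ U : Finset (Fin n), Admissible (pathGraph n) J₀ U ↔ GoodLR L R U)
    (x : (i : Fin (R - L + 1)) → Fin (chainLen n L R i.val)) :
    fC hLR hRn (gC hLR hadm x) = x := by
  funext i
  apply Fin.ext
  show coordN L R _ i.val = (x i).val
  have hval : (gC hLR hadm x).1
      = gsetP L R (fun i => if h : i < R - L + 1 then (x ⟨i, h⟩).val else 0) := rfl
  rw [hval, coord_gsetP_eq hLR hRn _ ?_ ?_ ?_ i.val (by omega : i.val ≤ R - L)]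
  · rw [dif_pos i.isLt]
  · rw [dif_pos (by omega : 0 < R - L + 1)]
    have := (x ⟨0, by omega⟩).isLt
    have h2 := lt_of_lt_of_eq this (chainLen_zero n L R)
    omega
  · rw [dif_pos (by omega : R - L < R - L + 1)]
    have := (x ⟨R - L, by omega⟩).isLt
    have h2 := lt_of_lt_of_eq this (chainLen_last n hLR)
    omega
  · intro i hi0 hik
    by_cases h : i < R - L + 1
    · rw [dif_pos h]
      have := (x ⟨i, h⟩).isLt
      have h2 := lt_of_lt_of_eq this (chainLen_mid n hi0 hik)
      omega
    · rw [dif_neg h]; omega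

theorem le_iff_fC (hLR : L < R) (hRn : R < n)
    (hadm : ∀ U : Finset (Fin n), Admissible (pathGraph n) J₀ U ↔ GoodLR L R U)
    (U V : CrossSection (pathGraph n) J₀) :
    U ≤ V ↔ ∀ i, fC hLR hRn U i ≤ fC hLR hRn V i := by
  constructor
  · intro h i
    exact coord_mono h i.val
  · intro h
    exact subset_of_coord_le hLR hRn ((hadm U.1).mp U.2) ((hadm V.1).mp V.2)
      (fun i hi => h ⟨i, by omega⟩)

theorem card_fC (hLR : L < R) (hRn : R < n) (U : CrossSection (pathGraph n) J₀) :
    U.1.card = ∑ i : Fin (R - L + 1), (fC hLR hRn U i).val := by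
  rw [cardSum hLR hRn U.1, Finset.sum_range fun i => coordN L R U.1 i]
  rfl

end Package
section Master

open Classical Finset

theorem master {n : ℕ} {J₀ : Finset (Fin n)} {L R : ℕ} (hLR : L < R) (hRn : R < n)
    (hadm : ∀ U : Finset (Fin n), Admissible (pathGraph n) J₀ U ↔ GoodLR L R U) :
    (∀ U W : CrossSection (pathGraph n) J₀, U ≤ W → ∀ i : ℕ,
      (Finset.univ.filter (fun V : CrossSection (pathGraph n) J₀ =>
          U ≤ V ∧ V ≤ W ∧ V.1.card = U.1.card + i)).card =
      (Finset.univ.filter (fun V : CrossSection (pathGraph n) J₀ =>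
          U ≤ V ∧ V ≤ W ∧ V.1.card + i = W.1.card)).card) ∧
    (∃ (k : ℕ) (c : Fin k → ℕ),
      Nonempty (CrossSection (pathGraph n) J₀ ≃o ((i : Fin k) → Fin (c i)))) := by
  constructor
  · -- local rank symmetry
    intro U W hUW i
    let σ : CrossSection (pathGraph n) J₀ → CrossSection (pathGraph n) J₀ :=
      fun V => gC hLR hadm (fun j =>
        ⟨min ((fC hLR hRn U j).val + (fC hLR hRn W j).val - (fC hLR hRn V j).val)
          (chainLen n L R j.val - 1),
          by have := chainLen_pos n L R j.val; omega⟩)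
    have hfσ : ∀ V : CrossSection (pathGraph n) J₀, U ≤ V → V ≤ W → ∀ j,
        (fC hLR hRn (σ V) j).val
          = (fC hLR hRn U j).val + (fC hLR hRn W j).val - (fC hLR hRn V j).val := by
      intro V hUV hVW j
      have h1 : (fC hLR hRn U j).val ≤ (fC hLR hRn V j).val :=
        (le_iff_fC hLR hRn hadm U V).mp hUV j
      have h2 : (fC hLR hRn V j).val ≤ (fC hLR hRn W j).val :=
        (le_iff_fC hLR hRn hadm V W).mp hVW j
      have h3 : (fC hLR hRn W j).val < chainLen n L R j.val := (fC hLR hRn W j).isLt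
      have hc : fC hLR hRn (σ V) = fun j =>
          (⟨min ((fC hLR hRn U j).val + (fC hLR hRn W j).val - (fC hLR hRn V j).val)
            (chainLen n L R j.val - 1),
            by have := chainLen_pos n L R j.val; omega⟩ : Fin (chainLen n L R j.val)) :=
        fC_gC hLR hRn hadm _
      rw [hc]
      simp only [Fin.val_mk]
      omega
    have hle2 : ∀ V : CrossSection (pathGraph n) J₀, U ≤ V → V ≤ W → ∀ j,
        (fC hLR hRn U j).val ≤ (fC hLR hRn V j).val
          ∧ (fC hLR hRn V j).val ≤ (fC hLR hRn W j).val := by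
      intro V hUV hVW j
      exact ⟨(le_iff_fC hLR hRn hadm U V).mp hUV j, (le_iff_fC hLR hRn hadm V W).mp hVW j⟩
    have hUleσ : ∀ V : CrossSection (pathGraph n) J₀, U ≤ V → V ≤ W →
        (U ≤ σ V ∧ σ V ≤ W) := by
      intro V hUV hVW
      constructor
      · refine (le_iff_fC hLR hRn hadm U (σ V)).mpr (fun j => ?_)
        rw [Fin.le_def, hfσ V hUV hVW j]
        have := hle2 V hUV hVW j
        omega
      · refine (le_iff_fC hLR hRn hadm (σ V) W).mpr (fun j => ?_)
        rw [Fin.le_def, hfσ V hUV hVW j]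
        have := hle2 V hUV hVW j
        omega
    have hcards : ∀ V : CrossSection (pathGraph n) J₀, U ≤ V → V ≤ W →
        (σ V).1.card + V.1.card = U.1.card + W.1.card := by
      intro V hUV hVW
      rw [card_fC hLR hRn (σ V), card_fC hLR hRn V, card_fC hLR hRn U, card_fC hLR hRn W]
      rw [Finset.sum_congr rfl (fun j _ => hfσ V hUV hVW j), ← Finset.sum_add_distrib,
        ← Finset.sum_add_distrib]
      apply Finset.sum_congr rfl
      intro j _
      have := hle2 V hUV hVW j
      omega
    have hσσ : ∀ V : CrossSection (pathGraph n) J₀, U ≤ V → V ≤ W → σ (σ V) = V := by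
      intro V hUV hVW
      obtain ⟨hU1, hW1⟩ := hUleσ V hUV hVW
      have hfe : fC hLR hRn (σ (σ V)) = fC hLR hRn V := by
        funext j
        apply Fin.ext
        rw [hfσ (σ V) hU1 hW1 j, hfσ V hUV hVW j]
        have := hle2 V hUV hVW j
        omega
      have h2 := congrArg (gC hLR hadm) hfe
      rw [gC_fC hLR hRn hadm, gC_fC hLR hRn hadm] at h2
      exact h2
    apply Finset.card_bij' (fun V _ => σ V) (fun V _ => σ V)
    · intro V hV
      simp only [Finset.mem_filter, Finset.mem_univ, true_and] at hV ⊢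
      obtain ⟨hUV, hVW, hc⟩ := hV
      refine ⟨(hUleσ V hUV hVW).1, (hUleσ V hUV hVW).2, ?_⟩
      have := hcards V hUV hVW
      omega
    · intro V hV
      simp only [Finset.mem_filter, Finset.mem_univ, true_and] at hV ⊢
      obtain ⟨hUV, hVW, hc⟩ := hV
      have hle : U.1.card ≤ W.1.card := Finset.card_le_card hUW
      have hVU : U.1.card ≤ V.1.card := Finset.card_le_card hUV
      refine ⟨(hUleσ V hUV hVW).1, (hUleσ V hUV hVW).2, ?_⟩
      have := hcards V hUV hVW
      omega
    · intro V hV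
      simp only [Finset.mem_filter, Finset.mem_univ, true_and] at hV
      exact hσσ V hV.1 hV.2.1
    · intro V hV
      simp only [Finset.mem_filter, Finset.mem_univ, true_and] at hV
      exact hσσ V hV.1 hV.2.1
  · refine ⟨R - L + 1, fun i => chainLen n L R i.val, ⟨?_⟩⟩
    exact {
      toFun := fC hLR hRn
      invFun := gC hLR hadm
      left_inv := gC_fC hLR hRn hadm
      right_inv := fC_gC hLR hRn hadm
      map_rel_iff' := @fun U V => by
        rw [Equiv.coe_fn_mk, Pi.le_def]
        exact (le_iff_fC hLR hRn hadm U V).symm }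

end Master
open scoped Classical in
theorem stmt_11 (n : ℕ) (hn : 1 ≤ n) (J₀ : Finset (Fin n))
    (hdist : ∀ x y z : CrossSection (pathGraph n) J₀,
      x ⊓ (y ⊔ z) = (x ⊓ y) ⊔ (x ⊓ z))
    (hbig : 1 < (Finset.univ \ J₀).card) :
    (∀ U W : CrossSection (pathGraph n) J₀, U ≤ W → ∀ i : ℕ,
      (Finset.univ.filter (fun V : CrossSection (pathGraph n) J₀ =>
          U ≤ V ∧ V ≤ W ∧ V.1.card = U.1.card + i)).card =
      (Finset.univ.filter (fun V : CrossSection (pathGraph n) J₀ =>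
          U ≤ V ∧ V ≤ W ∧ V.1.card + i = W.1.card)).card) ∧
    (∃ (k : ℕ) (c : Fin k → ℕ),
      Nonempty (CrossSection (pathGraph n) J₀ ≃o ((i : Fin k) → Fin (c i)))) := by
  classical
  set free : Finset (Fin n) := Finset.univ \ J₀ with hfreedef
  have hne : free.Nonempty := Finset.card_pos.mp (by omega)
  have hmemfree : ∀ v : Fin n, v ∈ free ↔ v ∉ J₀ := by
    intro v; simp [hfreedef]
  set l : Fin n := free.min' hne with hl
  set r : Fin n := free.max' hne with hr
  have hlr : l < r := Finset.min'_lt_max'_of_card _ hbig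
  have hLR : l.val < r.val := hlr
  have hRn : r.val < n := r.isLt
  have hlfree : l ∉ J₀ := (hmemfree l).mp (Finset.min'_mem free hne)
  have hrfree : r ∉ J₀ := (hmemfree r).mp (Finset.max'_mem free hne)
  have hmin : ∀ v : Fin n, v ∉ J₀ → l.val ≤ v.val ∧ v.val ≤ r.val := by
    intro v hv
    have hvf : v ∈ free := (hmemfree v).mpr hv
    exact ⟨Finset.min'_le free v hvf, Finset.le_max' free v hvf⟩
  have hfree : ∀ m (h : m < n), l.val ≤ m → m ≤ r.val → (⟨m, h⟩ : Fin n) ∉ J₀ := by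
    intro m h hLm hmR
    by_contra hmem
    have hmL : l.val ≠ m := fun he => hlfree (by rwa [show l = (⟨m, h⟩ : Fin n) from Fin.ext he])
    have hmR' : m ≠ r.val := fun he => hrfree (by rwa [show r = (⟨m, h⟩ : Fin n) from Fin.ext he.symm])
    have hS1 : l ∈ free.filter (fun v => v.val < m) :=
      Finset.mem_filter.mpr ⟨(hmemfree l).mpr hlfree, by omega⟩
    have hS2 : r ∈ free.filter (fun v => m < v.val) :=
      Finset.mem_filter.mpr ⟨(hmemfree r).mpr hrfree, by omega⟩
    set f1 : Fin n := (free.filter (fun v => v.val < m)).max' ⟨l, hS1⟩ with hf1def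
    set f2 : Fin n := (free.filter (fun v => m < v.val)).min' ⟨r, hS2⟩ with hf2def
    have hf1m := Finset.max'_mem (free.filter (fun v => v.val < m)) ⟨l, hS1⟩
    have hf2m := Finset.min'_mem (free.filter (fun v => m < v.val)) ⟨r, hS2⟩
    rw [Finset.mem_filter] at hf1m hf2m
    have hf1J : f1 ∉ J₀ := (hmemfree f1).mp hf1m.1
    have hf2J : f2 ∉ J₀ := (hmemfree f2).mp hf2m.1
    have hgap : ∀ v : Fin n, f1.val < v.val → v.val < f2.val → v ∈ J₀ := by
      intro v hv1 hv2
      by_contra hv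
      rcases lt_trichotomy v.val m with hc | hc | hc
      · have : v ∈ free.filter (fun w => w.val < m) :=
          Finset.mem_filter.mpr ⟨(hmemfree v).mpr hv, hc⟩
        have := Finset.le_max' _ v this
        rw [← hf1def] at this
        exact absurd this (by rw [Fin.le_def]; omega)
      · exact hv (by rwa [show v = (⟨m, h⟩ : Fin n) from Fin.ext hc])
      · have : v ∈ free.filter (fun w => m < w.val) :=
          Finset.mem_filter.mpr ⟨(hmemfree v).mpr hv, hc⟩
        have := Finset.min'_le _ v this
        rw [← hf2def] at this
        exact absurd this (by rw [Fin.le_def]; omega)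
    exact no_gap hdist f1 f2 hf1J hf2J (by omega) hgap
  exact master hLR hRn (adm_iff_good hLR hRn hfree hmin)
end

section
/- Let n ≥ 2, let Pₙ be the path graph on vertices Δ = {α₁,…,αₙ}, and let J ⊆ Δ. Then J is one of the following four sets — (i) J = ∅; (ii) J = {α₁,…,αᵢ} for some 1 ≤ i < n; (iii) J = {α_j,…,αₙ} for some 1 < j ≤ n; (iv) J = {α₁,…,αᵢ} ∪ {α_j,…,αₙ} with 1 ≤ i, j ≤ n and j − i ≥ 3 — if and only if Λ*(Pₙ,J) is a distributive lattice and the following hold: if J contains exactly one end node of Pₙ then |Δ − J| ≥ 1, and if J contains both end nodes of Pₙ then |Δ − J| ≥ 2. -/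
open SimpleGraph Finset

section Helpers

open Finset

variable {n : ℕ}

private lemma reachIn_of_interval_le {U : Finset (Fin n)} :
    ∀ (k : ℕ) (a b : Fin n), b.val - a.val = k → a.val ≤ b.val → a ∈ U →
    (∀ c : Fin n, a.val ≤ c.val → c.val ≤ b.val → c ∈ U) →
    ReachIn (pathGraph n) U a b := by
  intro k
  induction k with
  | zero =>
    intro a b hk hle ha h
    have : a = b := Fin.ext (by omega)
    subst this
    exact Relation.ReflTransGen.refl
  | succ m ih =>
    intro a b hk hle ha h
    have hab : a.val < b.val := by omega
    have ha1 : a.val + 1 < n := by have := b.isLt; omega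
    have ha'U : (⟨a.val + 1, ha1⟩ : Fin n) ∈ U := h _ (by simp) (by simpa using hab)
    have step : ReachIn (pathGraph n) U a ⟨a.val + 1, ha1⟩ :=
      Relation.ReflTransGen.single
        ⟨by rw [SimpleGraph.pathGraph_adj]; left; rfl, ha, ha'U⟩
    refine step.trans (ih ⟨a.val + 1, ha1⟩ b (by simp; omega) (by simpa using hab) ha'U ?_)
    intro c h1 h2
    exact h c (by simp at h1; omega) h2

lemma reachIn_of_interval {U : Finset (Fin n)} {a b : Fin n} (ha : a ∈ U)
    (h : ∀ c : Fin n, min a.val b.val ≤ c.val → c.val ≤ max a.val b.val → c ∈ U) :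
    ReachIn (pathGraph n) U a b := by
  rcases le_total a.val b.val with hle | hle
  · exact reachIn_of_interval_le _ a b rfl hle ha (fun c h1 h2 => h c (by omega) (by omega))
  · have hb : b ∈ U := h b (by omega) (by omega)
    have hr := reachIn_of_interval_le _ b a rfl hle hb (fun c h1 h2 => h c (by omega) (by omega))
    exact @Std.Symm.symm _ _ (@Relation.ReflTransGen.stdSymm _ _
      ⟨fun x y hxy => ⟨hxy.1.symm, hxy.2.2, hxy.2.1⟩⟩) _ _ hr

lemma mem_of_reachIn {U : Finset (Fin n)} {a b : Fin n} (ha : a ∈ U)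
    (hr : ReachIn (pathGraph n) U a b) :
    b ∈ U ∧ ∀ c : Fin n, min a.val b.val ≤ c.val → c.val ≤ max a.val b.val → c ∈ U := by
  induction hr with
  | refl => exact ⟨ha, fun c h1 h2 => by have : c = a := Fin.ext (by omega); rwa [this]⟩
  | @tail b' c' hr step ih =>
    obtain ⟨hb, hint⟩ := ih
    have hadj := step.1
    rw [SimpleGraph.pathGraph_adj] at hadj
    refine ⟨step.2.2, fun c h1 h2 => ?_⟩
    by_cases hc : min a.val b'.val ≤ c.val ∧ c.val ≤ max a.val b'.val
    · exact hint c hc.1 hc.2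
    · have hcc : c = c' := by
        apply Fin.ext
        rcases hadj with h | h
        · omega
        · omega
      rw [hcc]; exact step.2.2

lemma reachIn_singleton {U : Finset (Fin n)} {s x b : Fin n} (hU : ∀ v ∈ U, v = s)
    (hr : ReachIn (pathGraph n) U x b) (hx : x = s) : b = s := by
  induction hr with
  | refl => exact hx
  | tail hr step ih => exact hU _ step.2.2

lemma admissible_inter {J X Y : Finset (Fin n)} {l r : ℕ} (hlr : l ≤ r) (hrn : r < n)
    (hJ : ∀ x : Fin n, x ∈ J ↔ (x.val < l ∨ r < x.val))
    (hX : Admissible (pathGraph n) J X) (hY : Admissible (pathGraph n) J Y) :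
    Admissible (pathGraph n) J (X ∩ Y) := by
  intro a ha
  have haX : a ∈ X := (Finset.mem_inter.mp ha).1
  have haY : a ∈ Y := (Finset.mem_inter.mp ha).2
  obtain ⟨kx, hrx, hkxJ⟩ := hX a haX
  obtain ⟨ky, hry, hkyJ⟩ := hY a haY
  obtain ⟨hkxU, hXint⟩ := mem_of_reachIn haX hrx
  obtain ⟨hkyU, hYint⟩ := mem_of_reachIn haY hry
  rw [hJ] at hkxJ hkyJ
  push_neg at hkxJ hkyJ
  refine ⟨⟨min (max a.val l) r, by omega⟩, ?_, ?_⟩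
  · refine reachIn_of_interval ha (fun c h1 h2 => Finset.mem_inter.mpr ⟨?_, ?_⟩)
    · refine hXint c ?_ ?_ <;> simp only [] at h1 h2 <;> omega
    · refine hYint c ?_ ?_ <;> simp only [] at h1 h2 <;> omega
  · rw [hJ]; simp only []; omega

lemma meetFinset_eq_inter {J : Finset (Fin n)} {l r : ℕ} (hlr : l ≤ r) (hrn : r < n)
    (hJ : ∀ x : Fin n, x ∈ J ↔ (x.val < l ∨ r < x.val))
    {X Y : Finset (Fin n)} (hX : Admissible (pathGraph n) J X)
    (hY : Admissible (pathGraph n) J Y) :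
    CrossSection.meetFinset (pathGraph n) J X Y = X ∩ Y :=
  le_antisymm
    (Finset.subset_inter (CrossSection.meetFinset_subset_left _ _ _ _)
      (CrossSection.meetFinset_subset_right _ _ _ _))
    (CrossSection.subset_meetFinset (admissible_inter hlr hrn hJ hX hY)
      Finset.inter_subset_left Finset.inter_subset_right)

lemma distrib_of_interval {J : Finset (Fin n)} {l r : ℕ} (hlr : l ≤ r) (hrn : r < n)
    (hJ : ∀ x : Fin n, x ∈ J ↔ (x.val < l ∨ r < x.val)) :
    ∀ x y z : CrossSection (pathGraph n) J, x ⊓ (y ⊔ z) = (x ⊓ y) ⊔ (x ⊓ z) := by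
  intro x y z
  apply Subtype.ext
  show CrossSection.meetFinset (pathGraph n) J x.1 (y.1 ∪ z.1) =
    CrossSection.meetFinset (pathGraph n) J x.1 y.1 ∪
      CrossSection.meetFinset (pathGraph n) J x.1 z.1
  rw [meetFinset_eq_inter hlr hrn hJ x.2 (admissible_union y.2 z.2),
      meetFinset_eq_inter hlr hrn hJ x.2 y.2, meetFinset_eq_inter hlr hrn hJ x.2 z.2]
  exact Finset.inter_union_distrib_left _ _ _

lemma not_distrib {J : Finset (Fin n)} (a c : Fin n) (hac : a.val + 1 < c.val)
    (haJ : a ∉ J) (hcJ : c ∉ J)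
    (hmid : ∀ e : Fin n, a.val < e.val → e.val < c.val → e ∈ J) :
    ¬ (∀ x y z : CrossSection (pathGraph n) J, x ⊓ (y ⊔ z) = (x ⊓ y) ⊔ (x ⊓ z)) := by
  intro hdist
  have hn' : a.val + 1 < n := lt_trans hac c.isLt
  set a1 : Fin n := ⟨a.val + 1, hn'⟩ with ha1def
  set X : Finset (Fin n) :=
    Finset.univ.filter (fun v => v.val = a.val ∨ v.val = a.val + 1) with hXdef
  set Y : Finset (Fin n) :=
    Finset.univ.filter (fun v => a.val + 1 ≤ v.val ∧ v.val ≤ c.val) with hYdef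
  set Z : Finset (Fin n) := {a} with hZdef
  have hmemX : ∀ v : Fin n, v ∈ X ↔ (v.val = a.val ∨ v.val = a.val + 1) := by
    intro v; simp [hXdef]
  have hmemY : ∀ v : Fin n, v ∈ Y ↔ (a.val + 1 ≤ v.val ∧ v.val ≤ c.val) := by
    intro v; simp [hYdef]
  have haX : a ∈ X := by rw [hmemX]; left; rfl
  have ha1X : a1 ∈ X := by rw [hmemX]; right; rfl
  have ha1Y : a1 ∈ Y := by rw [hmemY]; exact ⟨le_refl _, Nat.le_of_lt hac⟩
  have ha1J : a1 ∈ J := hmid a1 (Nat.lt_succ_self _) hac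
  have hXadm : Admissible (pathGraph n) J X := by
    intro v hv
    rw [hmemX] at hv
    refine ⟨a, reachIn_of_interval (by rw [hmemX]; exact hv) (fun d h1 h2 => ?_), haJ⟩
    rw [hmemX]; omega
  have hYadm : Admissible (pathGraph n) J Y := by
    intro v hv
    rw [hmemY] at hv
    refine ⟨c, reachIn_of_interval (by rw [hmemY]; exact hv) (fun d h1 h2 => ?_), hcJ⟩
    rw [hmemY]; omega
  have hZadm : Admissible (pathGraph n) J Z := by
    intro v hv
    rw [hZdef, Finset.mem_singleton] at hv
    subst hv
    exact ⟨v, Relation.ReflTransGen.refl, haJ⟩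
  let xC : CrossSection (pathGraph n) J := ⟨X, hXadm⟩
  let yC : CrossSection (pathGraph n) J := ⟨Y, hYadm⟩
  let zC : CrossSection (pathGraph n) J := ⟨Z, hZadm⟩
  have heq := congrArg Subtype.val (hdist xC yC zC)
  have hLHS : a1 ∈ CrossSection.meetFinset (pathGraph n) J X (Y ∪ Z) := by
    have hXsub : X ⊆ Y ∪ Z := by
      intro v hv
      rw [hmemX] at hv
      rcases hv with hv | hv
      · refine Finset.mem_union_right _ ?_
        rw [hZdef, Finset.mem_singleton]
        exact Fin.ext hv
      · refine Finset.mem_union_left _ ?_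
        rw [hmemY]; omega
    exact CrossSection.subset_meetFinset hXadm (le_refl X) hXsub ha1X
  have hLHS2 : a1 ∈ CrossSection.meetFinset (pathGraph n) J X Y ∪
      CrossSection.meetFinset (pathGraph n) J X Z := by
    have h1 : a1 ∈ (xC ⊓ (yC ⊔ zC)).val := hLHS
    rw [heq] at h1
    exact h1
  rcases Finset.mem_union.mp hLHS2 with hmem | hmem
  · -- a1 ∈ meetFinset X Y, but meetFinset X Y ⊆ {a1} and a1 ∈ J
    have hsub : ∀ v ∈ CrossSection.meetFinset (pathGraph n) J X Y, v = a1 := by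
      intro v hv
      have hvX := CrossSection.meetFinset_subset_left (pathGraph n) J X Y hv
      have hvY := CrossSection.meetFinset_subset_right (pathGraph n) J X Y hv
      rw [hmemX] at hvX; rw [hmemY] at hvY
      exact Fin.ext (by simp only [ha1def]; omega)
    obtain ⟨b, hrb, hbJ⟩ := CrossSection.admissible_meetFinset (pathGraph n) J X Y a1 hmem
    have : b = a1 := reachIn_singleton hsub hrb rfl
    rw [this] at hbJ
    exact hbJ ha1J
  · have := CrossSection.meetFinset_subset_right (pathGraph n) J X Z hmem
    rw [hZdef, Finset.mem_singleton] at this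
    have : a1.val = a.val := congrArg Fin.val this
    simp only [ha1def] at this
    omega

end Helpers

theorem stmt_13 (n : ℕ) (hn : 2 ≤ n) (J : Finset (Fin n)) :
    (J = ∅ ∨
     (∃ i : ℕ, 1 ≤ i ∧ i < n ∧
        J = Finset.univ.filter (fun x : Fin n => x.val + 1 ≤ i)) ∨
     (∃ j : ℕ, 1 < j ∧ j ≤ n ∧
        J = Finset.univ.filter (fun x : Fin n => j ≤ x.val + 1)) ∨
     (∃ i j : ℕ, 1 ≤ i ∧ i ≤ n ∧ 1 ≤ j ∧ j ≤ n ∧ i + 3 ≤ j ∧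
        J = Finset.univ.filter (fun x : Fin n => x.val + 1 ≤ i ∨ j ≤ x.val + 1))) ↔
    ((∀ x y z : CrossSection (pathGraph n) J, x ⊓ (y ⊔ z) = (x ⊓ y) ⊔ (x ⊓ z)) ∧
     ((((⟨0, by omega⟩ : Fin n) ∈ J ∧ (⟨n - 1, by omega⟩ : Fin n) ∉ J) ∨
       ((⟨0, by omega⟩ : Fin n) ∉ J ∧ (⟨n - 1, by omega⟩ : Fin n) ∈ J) →
         1 ≤ (Finset.univ \ J).card) ∧
      (((⟨0, by omega⟩ : Fin n) ∈ J ∧ (⟨n - 1, by omega⟩ : Fin n) ∈ J) →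
         2 ≤ (Finset.univ \ J).card))) := by
  constructor
  · -- forward direction
    intro hL
    have hP : ∃ l r : ℕ, l ≤ r ∧ r < n ∧
        ∀ x : Fin n, x ∈ J ↔ (x.val < l ∨ r < x.val) := by
      rcases hL with h | ⟨i, hi1, hi2, h⟩ | ⟨j, hj1, hj2, h⟩ |
        ⟨i, j, hi1, hi2, hj1, hj2, hij, h⟩
      · refine ⟨0, n - 1, by omega, by omega, fun x => ?_⟩
        subst h
        simp only [Finset.notMem_empty, false_iff]
        have := x.isLt
        omega
      · refine ⟨i, n - 1, by omega, by omega, fun x => ?_⟩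
        subst h
        simp only [Finset.mem_filter, Finset.mem_univ, true_and]
        have := x.isLt
        omega
      · refine ⟨0, j - 2, by omega, by omega, fun x => ?_⟩
        subst h
        simp only [Finset.mem_filter, Finset.mem_univ, true_and]
        have := x.isLt
        omega
      · refine ⟨i, j - 2, by omega, by omega, fun x => ?_⟩
        subst h
        simp only [Finset.mem_filter, Finset.mem_univ, true_and]
        have := x.isLt
        omega
    obtain ⟨l, r, hlr, hrn, hJ⟩ := hP
    refine ⟨distrib_of_interval hlr hrn hJ, ?_, ?_⟩
    · rintro (⟨-, h⟩ | ⟨h, -⟩)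
      · exact Finset.card_pos.mpr ⟨_, Finset.mem_sdiff.mpr ⟨Finset.mem_univ _, h⟩⟩
      · exact Finset.card_pos.mpr ⟨_, Finset.mem_sdiff.mpr ⟨Finset.mem_univ _, h⟩⟩
    · rintro ⟨h0, h1⟩
      rcases hL with h | ⟨i, hi1, hi2, h⟩ | ⟨j, hj1, hj2, h⟩ |
        ⟨i, j, hi1, hi2, hj1, hj2, hij, h⟩
      · rw [h] at h0
        exact absurd h0 (Finset.notMem_empty _)
      · rw [h, Finset.mem_filter] at h1
        have h2 := h1.2
        simp only [Fin.val_mk] at h2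
        omega
      · rw [h, Finset.mem_filter] at h0
        have h2 := h0.2
        simp only [Fin.val_mk] at h2
        omega
      · rw [h]
        have hin : i < n := by omega
        have hin1 : i + 1 < n := by omega
        refine Finset.one_lt_card.mpr ⟨⟨i, hin⟩, ?_, ⟨i + 1, hin1⟩, ?_, ?_⟩
        · refine Finset.mem_sdiff.mpr ⟨Finset.mem_univ _, fun hmem => ?_⟩
          have h2 := (Finset.mem_filter.mp hmem).2
          simp only [Fin.val_mk] at h2
          omega
        · refine Finset.mem_sdiff.mpr ⟨Finset.mem_univ _, fun hmem => ?_⟩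
          have h2 := (Finset.mem_filter.mp hmem).2
          simp only [Fin.val_mk] at h2
          omega
        · intro hE
          have h2 := congrArg Fin.val hE
          simp only [Fin.val_mk] at h2
          omega
  · -- reverse direction
    rintro ⟨hdist, hc1, hc2⟩
    have hJu : J ≠ Finset.univ := by
      intro h
      have h2 := hc2 ⟨by rw [h]; exact Finset.mem_univ _, by rw [h]; exact Finset.mem_univ _⟩
      rw [h, Finset.sdiff_self, Finset.card_empty] at h2
      omega
    have hS : (Finset.univ \ J).Nonempty := by
      rw [Finset.sdiff_nonempty]
      intro hsub
      exact hJu (le_antisymm (Finset.subset_univ J) hsub)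
    set S := Finset.univ \ J with hSdef
    have hmemS : ∀ x : Fin n, x ∈ S ↔ x ∉ J := by
      intro x
      rw [hSdef, Finset.mem_sdiff]
      simp
    have hP : ∃ l r : ℕ, l ≤ r ∧ r < n ∧
        ∀ x : Fin n, x ∈ J ↔ (x.val < l ∨ r < x.val) := by
      by_cases hall : ∀ e : Fin n, (S.min' hS).val ≤ e.val → e.val ≤ (S.max' hS).val → e ∈ S
      · refine ⟨(S.min' hS).val, (S.max' hS).val, S.min'_le _ (S.max'_mem hS),
          (S.max' hS).isLt, fun x => ?_⟩
        constructor
        · intro hxJ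
          by_contra hcon
          push_neg at hcon
          exact (hmemS x).mp (hall x hcon.1 hcon.2) hxJ
        · intro hor
          by_contra hxJ
          have hxS := (hmemS x).mpr hxJ
          have h1 : (S.min' hS).val ≤ x.val := S.min'_le x hxS
          have h2 : x.val ≤ (S.max' hS).val := S.le_max' x hxS
          omega
      · exfalso
        push_neg at hall
        obtain ⟨b, hb1, hb2, hbS⟩ := hall
        have hbJ : b ∈ J := by
          by_contra hbJ
          exact hbS ((hmemS b).mpr hbJ)
        have hminS := S.min'_mem hS
        have hmaxS := S.max'_mem hS
        have hminb : (S.min' hS).val < b.val := by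
          rcases Nat.lt_or_ge (S.min' hS).val b.val with h | h
          · exact h
          · exfalso
            have : S.min' hS = b := Fin.ext (by omega)
            rw [this] at hminS
            exact hbS hminS
        have hmaxb : b.val < (S.max' hS).val := by
          rcases Nat.lt_or_ge b.val (S.max' hS).val with h | h
          · exact h
          · exfalso
            have : S.max' hS = b := Fin.ext (by omega)
            rw [this] at hmaxS
            exact hbS hmaxS
        have hA : (S.filter (fun e => e.val < b.val)).Nonempty :=
          ⟨S.min' hS, Finset.mem_filter.mpr ⟨hminS, hminb⟩⟩
        have hC : (S.filter (fun e => b.val < e.val)).Nonempty :=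
          ⟨S.max' hS, Finset.mem_filter.mpr ⟨hmaxS, hmaxb⟩⟩
        set a := (S.filter (fun e => e.val < b.val)).max' hA with hadef
        set c := (S.filter (fun e => b.val < e.val)).min' hC with hcdef
        have haF := Finset.mem_filter.mp ((S.filter (fun e => e.val < b.val)).max'_mem hA)
        have hcF := Finset.mem_filter.mp ((S.filter (fun e => b.val < e.val)).min'_mem hC)
        have haJ : a ∉ J := (hmemS a).mp haF.1
        have hcJ : c ∉ J := (hmemS c).mp hcF.1
        have hmid : ∀ e : Fin n, a.val < e.val → e.val < c.val → e ∈ J := by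
          intro e he1 he2
          by_contra heJ
          have heS := (hmemS e).mpr heJ
          rcases lt_trichotomy e.val b.val with h | h | h
          · have heA : e ∈ S.filter (fun e => e.val < b.val) :=
              Finset.mem_filter.mpr ⟨heS, h⟩
            have := (S.filter (fun e => e.val < b.val)).le_max' e heA
            have hv : e.val ≤ a.val := this
            omega
          · exact heJ ((Fin.ext h : e = b) ▸ hbJ)
          · have heC : e ∈ S.filter (fun e => b.val < e.val) :=
              Finset.mem_filter.mpr ⟨heS, h⟩
            have := (S.filter (fun e => b.val < e.val)).min'_le e heC
            have hv : c.val ≤ e.val := this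
            omega
        have hac : a.val + 1 < c.val := by
          have := haF.2
          have := hcF.2
          omega
        exact not_distrib a c hac haJ hcJ hmid hdist
    obtain ⟨l, r, hlr, hrn, hJ⟩ := hP
    by_cases hl : l = 0
    · by_cases hr : r = n - 1
      · left
        refine Finset.eq_empty_iff_forall_notMem.mpr fun x hx => ?_
        rw [hJ] at hx
        have := x.isLt
        omega
      · right; right; left
        refine ⟨r + 2, by omega, by omega, ?_⟩
        ext x
        rw [hJ x, Finset.mem_filter]
        have := x.isLt
        simp only [Finset.mem_univ, true_and]
        omega
    · by_cases hr : r = n - 1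
      · right; left
        refine ⟨l, by omega, by omega, ?_⟩
        ext x
        rw [hJ x, Finset.mem_filter]
        have := x.isLt
        simp only [Finset.mem_univ, true_and]
        omega
      · have h0J : (⟨0, by omega⟩ : Fin n) ∈ J := by
          rw [hJ]
          simp only [Fin.val_mk]
          omega
        have h1J : (⟨n - 1, by omega⟩ : Fin n) ∈ J := by
          rw [hJ]
          simp only [Fin.val_mk]
          omega
        have h2 := hc2 ⟨h0J, h1J⟩
        obtain ⟨u, hu, v, hv, huv⟩ := Finset.one_lt_card.mp h2
        have hu' := (Finset.mem_sdiff.mp hu).2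
        have hv' := (Finset.mem_sdiff.mp hv).2
        rw [hJ] at hu' hv'
        push_neg at hu' hv'
        have hne : u.val ≠ v.val := fun hE => huv (Fin.ext hE)
        right; right; right
        refine ⟨l, r + 2, by omega, by omega, by omega, by omega, by omega, ?_⟩
        ext x
        rw [hJ x, Finset.mem_filter]
        have := x.isLt
        simp only [Finset.mem_univ, true_and]
        omega
end
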